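/- arXiv:2203.10801 — 3 statements merged into one kernel-verified Lean document; each statement's English description precedes it below -/
import Mathlib

section
/- Let n ≥ 4 with n ≡ 1 (mod 3), and let V = (Fin n → ZMod 3) with the symmetric bilinear form B(x,y) = Σ_{i=1}^{n−1} x_i y_i + 2 x_n y_n (Gram determinant −1, i.e., type '−'). Then: (a) there exists an injective group homomorphism ψ from the symmetric group S_{n+2} to the group of linear automorphisms of V such that for every transposition τ ∈ S_{n+2}, ψ(τ) is a reflection t_v for some v ∈ V with B(v,v) = 2; and (b) there is no injective group homomorphism from S_{n+3} to the linear automorphisms of V sending every transposition to such a reflection. (Equivalently, φ(O_n^{−,+}(3)) = n+2 when n ≡ 1 (mod 3).) -/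
/-- The symmetric bilinear form `B x y = ∑_{i<n-1} x i * y i + 2 * x (n-1) * y (n-1)`
on `(ZMod 3)^n` (Gram determinant `-1`, type `-`). -/
def oForm (n : ℕ) (x y : Fin n → ZMod 3) : ZMod 3 :=
  ∑ i : Fin n, (if (i : ℕ) = n - 1 then 2 else 1) * (x i * y i)

namespace PhiAux

lemma oForm_comm {n : ℕ} (x y : Fin n → ZMod 3) : oForm n x y = oForm n y x := by
  unfold oForm; apply Finset.sum_congr rfl; intros; ring

def BL (n : ℕ) : (Fin n → ZMod 3) →ₗ[ZMod 3] (Fin n → ZMod 3) →ₗ[ZMod 3] ZMod 3 :=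
  LinearMap.mk₂ (ZMod 3) (oForm n)
    (by intro x x' y; unfold oForm; rw [← Finset.sum_add_distrib]
        apply Finset.sum_congr rfl; intro i _; simp only [Pi.add_apply]; ring)
    (by intro c x y; unfold oForm; rw [Finset.smul_sum]
        apply Finset.sum_congr rfl; intro i _
        simp only [Pi.smul_apply, smul_eq_mul]; ring)
    (by intro x y y'; unfold oForm; rw [← Finset.sum_add_distrib]
        apply Finset.sum_congr rfl; intro i _; simp only [Pi.add_apply]; ring)
    (by intro c x y; unfold oForm; rw [Finset.smul_sum]
        apply Finset.sum_congr rfl; intro i _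
        simp only [Pi.smul_apply, smul_eq_mul]; ring)

lemma BL_apply {n : ℕ} (x y : Fin n → ZMod 3) : BL n x y = oForm n x y := rfl

lemma oForm_smul_left {n : ℕ} (c : ZMod 3) (x y : Fin n → ZMod 3) :
    oForm n (c • x) y = c * oForm n x y := by
  have := (BL n).map_smul₂ c x; rw [← BL_apply, ← BL_apply]
  rw [(BL n).map_smul₂ c x]; rfl

lemma oForm_sub_left {n : ℕ} (x x' y : Fin n → ZMod 3) :
    oForm n (x - x') y = oForm n x y - oForm n x' y := by
  rw [← BL_apply, ← BL_apply, ← BL_apply, map_sub, LinearMap.sub_apply]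

lemma oForm_sub_right {n : ℕ} (x y y' : Fin n → ZMod 3) :
    oForm n x (y - y') = oForm n x y - oForm n x y' := by
  rw [← BL_apply, ← BL_apply, ← BL_apply, map_sub]

lemma oForm_smul_right {n : ℕ} (c : ZMod 3) (x y : Fin n → ZMod 3) :
    oForm n x (c • y) = c * oForm n x y := by
  rw [← BL_apply, ← BL_apply, map_smul]; rfl

lemma oForm_sum_left {n : ℕ} {ι : Type*} (s : Finset ι) (f : ι → (Fin n → ZMod 3))
    (y : Fin n → ZMod 3) : oForm n (∑ i ∈ s, f i) y = ∑ i ∈ s, oForm n (f i) y :=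
  map_sum ((BL n).flip y) f s

lemma oForm_zero_left {n : ℕ} (y : Fin n → ZMod 3) : oForm n 0 y = 0 := by
  rw [← BL_apply, map_zero]; rfl

/-- disjoint swaps commute -/
lemma swap_comm_disj {α : Type*} [DecidableEq α] {a b c d : α}
    (hac : a ≠ c) (had : a ≠ d) (hbc : b ≠ c) (hbd : b ≠ d) :
    Equiv.swap a b * Equiv.swap c d = Equiv.swap c d * Equiv.swap a b := by
  ext x
  simp only [Equiv.Perm.mul_apply]
  rcases eq_or_ne x c with rfl | hxc
  · rw [Equiv.swap_apply_left, Equiv.swap_apply_of_ne_of_ne had.symm hbd.symm,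
      Equiv.swap_apply_of_ne_of_ne hac.symm hbc.symm, Equiv.swap_apply_left]
  rcases eq_or_ne x d with rfl | hxd
  · rw [Equiv.swap_apply_right, Equiv.swap_apply_of_ne_of_ne hac.symm hbc.symm,
      Equiv.swap_apply_of_ne_of_ne had.symm hbd.symm, Equiv.swap_apply_right]
  rw [Equiv.swap_apply_of_ne_of_ne hxc hxd]
  rcases eq_or_ne x a with rfl | hxa
  · rw [Equiv.swap_apply_left, Equiv.swap_apply_of_ne_of_ne hbc hbd]
  rcases eq_or_ne x b with rfl | hxb
  · rw [Equiv.swap_apply_right, Equiv.swap_apply_of_ne_of_ne hac had]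
  rw [Equiv.swap_apply_of_ne_of_ne hxa hxb, Equiv.swap_apply_of_ne_of_ne hxc hxd]

lemma swap_cycle_apply {α : Type*} [DecidableEq α] {a b c : α}
    (hab : a ≠ b) (hbc : b ≠ c) (hac : a ≠ c) (x : α) :
    (Equiv.swap a b * Equiv.swap b c) x
      = if x = a then b else if x = b then c else if x = c then a else x := by
  simp only [Equiv.Perm.mul_apply]
  rcases eq_or_ne x a with rfl | hxa
  · rw [if_pos rfl, Equiv.swap_apply_of_ne_of_ne hab hac, Equiv.swap_apply_left]
  rcases eq_or_ne x b with rfl | hxb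
  · rw [if_neg hxa, if_pos rfl, Equiv.swap_apply_left,
      Equiv.swap_apply_of_ne_of_ne hac.symm hbc.symm]
  rcases eq_or_ne x c with rfl | hxc
  · rw [if_neg hxa, if_neg hxb, if_pos rfl, Equiv.swap_apply_right, Equiv.swap_apply_right]
  · rw [if_neg hxa, if_neg hxb, if_neg hxc, Equiv.swap_apply_of_ne_of_ne hxb hxc,
      Equiv.swap_apply_of_ne_of_ne hxa hxb]

lemma swap_cube {α : Type*} [DecidableEq α] {a b c : α}
    (hab : a ≠ b) (hbc : b ≠ c) (hac : a ≠ c) :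
    (Equiv.swap a b * Equiv.swap b c) ^ 3 = 1 := by
  set σ := Equiv.swap a b * Equiv.swap b c with hσ
  ext x
  rw [pow_three]
  show σ (σ (σ x)) = x
  rw [hσ, swap_cycle_apply hab hbc hac x, swap_cycle_apply hab hbc hac,
    swap_cycle_apply hab hbc hac]
  rcases eq_or_ne x a with rfl | hxa
  · simp [hab, hbc, hac, hab.symm, hbc.symm, hac.symm]
  rcases eq_or_ne x b with rfl | hxb
  · simp [hab, hbc, hac, hab.symm, hbc.symm, hac.symm]
  rcases eq_or_ne x c with rfl | hxc
  · simp [hab, hbc, hac, hab.symm, hbc.symm, hac.symm]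
  · simp [hxa, hxb, hxc]

/-- the reflection dichotomy: commuting reflections are orthogonal or equal. -/
lemma refl_dichotomy {n : ℕ} (u v : Fin n → ZMod 3)
    (hu : oForm n u u = 2)
    (hcomm : ∀ w : Fin n → ZMod 3,
      (w - oForm n w v • v) - oForm n (w - oForm n w v • v) u • u
        = (w - oForm n w u • u) - oForm n (w - oForm n w u • u) v • v) :
    oForm n u v = 0 ∨ ∀ w, w - oForm n w u • u = w - oForm n w v • v := by
  have key : ∀ w, (oForm n w v * oForm n v u) • u = (oForm n w u * oForm n u v) • v := by
    intro w
    have h := hcomm w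
    rw [oForm_sub_left, oForm_sub_left, oForm_smul_left, oForm_smul_left,
      sub_smul, sub_smul] at h
    have h4 : (oForm n w v * oForm n v u) • u - (oForm n w u * oForm n u v) • v = 0 := by
      calc (oForm n w v * oForm n v u) • u - (oForm n w u * oForm n u v) • v
          = (w - oForm n w v • v - (oForm n w u • u - (oForm n w v * oForm n v u) • u))
            - (w - oForm n w u • u - (oForm n w v • v - (oForm n w u * oForm n u v) • v)) := by
            abel
        _ = 0 := sub_eq_zero.mpr h
    exact sub_eq_zero.mp h4
  by_cases hb : oForm n u v = 0
  · exact Or.inl hb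
  right
  have hvu : oForm n v u = oForm n u v := oForm_comm v u
  have hb2 : oForm n u v * oForm n u v = 1 := by
    have : ∀ z : ZMod 3, z ≠ 0 → z * z = 1 := by decide
    exact this _ hb
  have hkeyu := key u
  rw [hvu, hb2, hu, one_smul] at hkeyu
  -- hkeyu : u = (2 * oForm n u v) • v
  intro w
  rw [hkeyu, oForm_smul_right, smul_smul]
  have hs : 2 * oForm n u v * oForm n w v * (2 * oForm n u v) = oForm n w v := by
    have h3 : (3 : ZMod 3) = 0 := by decide
    linear_combination (4 * oForm n w v) * hb2 + oForm n w v * h3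
  rw [hs]


lemma exists_notin_finset {k : ℕ} (s : Finset (Fin k)) (hs : s.card < k) :
    ∃ x : Fin k, x ∉ s := by
  by_contra hcon
  push_neg at hcon
  have : (Finset.univ : Finset (Fin k)) ⊆ s := fun x _ => hcon x
  have := Finset.card_le_card this
  simp [Finset.card_univ] at this
  omega

lemma LEmul_apply {R M : Type*} [CommRing R] [AddCommGroup M] [Module R M]
    (e f : M ≃ₗ[R] M) (x : M) : (e * f) x = e (f x) := rfl

theorem partB (n : ℕ) (hn : 4 ≤ n) (hmod : n % 3 = 1) :
    ¬ (∃ ψ : Equiv.Perm (Fin (n + 3)) →* ((Fin n → ZMod 3) ≃ₗ[ZMod 3] (Fin n → ZMod 3)),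
      Function.Injective ψ ∧
      ∀ τ : Equiv.Perm (Fin (n + 3)), τ.IsSwap →
        ∃ v : Fin n → ZMod 3, oForm n v v = 2 ∧
          ∀ w, (ψ τ) w = w - oForm n w v • v) := by
  rintro ⟨ψ, hinj, hsw⟩
  -- basic index bookkeeping
  have hn3 : 0 < n + 3 := by omega
  set F : ℕ → Fin (n + 3) := fun i => ⟨i % (n + 3), Nat.mod_lt _ hn3⟩ with hF
  have Fval : ∀ i, i < n + 3 → ((F i : ℕ) = i) := fun i h => Nat.mod_eq_of_lt h
  have Fne : ∀ i j, i < n + 3 → j < n + 3 → i ≠ j → F i ≠ F j := by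
    intro i j hi hj hij h
    have h2 : ((F i : ℕ)) = ((F j : ℕ)) := congrArg Fin.val h
    rw [Fval i hi, Fval j hj] at h2
    exact hij h2
  set τ : ℕ → Equiv.Perm (Fin (n + 3)) := fun i => Equiv.swap (F i) (F (i + 1)) with hτ
  have hτsw : ∀ i, i + 1 < n + 3 → (τ i).IsSwap := by
    intro i h
    exact ⟨F i, F (i + 1), Fne i (i+1) (by omega) h (by omega), rfl⟩
  -- the reflection vectors
  set u : ℕ → (Fin n → ZMod 3) := fun i =>
    if h : i < n + 2 then Classical.choose (hsw (τ i) (hτsw i (by omega))) else 0 with hu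
  have huspec : ∀ i (h : i < n + 2), oForm n (u i) (u i) = 2 ∧
      ∀ w, (ψ (τ i)) w = w - oForm n w (u i) • u i := by
    intro i h
    have := Classical.choose_spec (hsw (τ i) (hτsw i (by omega)))
    simpa [hu, dif_pos h] using this
  have hu2 : ∀ i, i < n + 2 → oForm n (u i) (u i) = 2 := fun i h => (huspec i h).1
  have hurefl : ∀ i, i < n + 2 → ∀ w, (ψ (τ i)) w = w - oForm n w (u i) • u i :=
    fun i h => (huspec i h).2
  -- distinct non-adjacent transpositions have orthogonal vectors
  have hG0 : ∀ i j, j < n + 2 → i + 2 ≤ j → oForm n (u i) (u j) = 0 := by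
    intro i j hj hij
    have hi : i < n + 2 := by omega
    have hperm : τ i * τ j = τ j * τ i := by
      exact PhiAux.swap_comm_disj
        (Fne i j (by omega) (by omega) (by omega))
        (Fne i (j+1) (by omega) (by omega) (by omega))
        (Fne (i+1) j (by omega) (by omega) (by omega))
        (Fne (i+1) (j+1) (by omega) (by omega) (by omega))
    have hmul : ψ (τ i) * ψ (τ j) = ψ (τ j) * ψ (τ i) := by
      rw [← map_mul, ← map_mul, hperm]
    have hpt : ∀ w, (ψ (τ i)) ((ψ (τ j)) w) = (ψ (τ j)) ((ψ (τ i)) w) := by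
      intro w
      rw [← LEmul_apply, hmul, LEmul_apply]
    have hcomm : ∀ w : Fin n → ZMod 3,
        (w - oForm n w (u j) • u j) - oForm n (w - oForm n w (u j) • u j) (u i) • u i
          = (w - oForm n w (u i) • u i) - oForm n (w - oForm n w (u i) • u i) (u j) • u j := by
      intro w
      have := hpt w
      rw [hurefl j hj w, hurefl i hi _, hurefl i hi w, hurefl j hj _] at this
      exact this
    rcases PhiAux.refl_dichotomy (u i) (u j) (hu2 i hi) hcomm with h0 | heq
    · exact h0
    · exfalso
      have hψeq : ψ (τ i) = ψ (τ j) := by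
        apply LinearEquiv.ext
        intro w
        rw [hurefl i hi w, hurefl j hj w, heq w]
      have hτeq : τ i = τ j := hinj hψeq
      have := congrArg (fun p : Equiv.Perm (Fin (n+3)) => p (F i)) hτeq
      simp only [hτ] at this
      rw [Equiv.swap_apply_left, Equiv.swap_apply_of_ne_of_ne
        (Fne i j (by omega) (by omega) (by omega))
        (Fne i (j+1) (by omega) (by omega) (by omega))] at this
      exact (Fne (i+1) i (by omega) (by omega) (by omega)) this
  -- adjacent transpositions: vectors not orthogonal
  have hGadj : ∀ i, i + 1 < n + 2 → oForm n (u i) (u (i + 1)) ≠ 0 := by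
    intro i hi h0
    have hi' : i < n + 2 := by omega
    have h0' : oForm n (u (i+1)) (u i) = 0 := by rw [PhiAux.oForm_comm]; exact h0
    -- the two reflections commute as linear equivs
    have hcommpt : ∀ w, (ψ (τ i)) ((ψ (τ (i+1))) w) = (ψ (τ (i+1))) ((ψ (τ i)) w) := by
      intro w
      rw [hurefl (i+1) hi w, hurefl i hi' _, hurefl i hi' w, hurefl (i+1) hi _]
      rw [PhiAux.oForm_sub_left, PhiAux.oForm_sub_left, PhiAux.oForm_smul_left,
        PhiAux.oForm_smul_left, h0, h0']
      ring_nf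
    have hmulcomm : ψ (τ i) * ψ (τ (i+1)) = ψ (τ (i+1)) * ψ (τ i) := by
      apply LinearEquiv.ext
      intro w
      rw [LEmul_apply, LEmul_apply]
      exact hcommpt w
    have hswsq : ∀ j, j + 1 < n + 3 → ψ (τ j) * ψ (τ j) = 1 := by
      intro j hj
      rw [← map_mul]
      rw [hτ]
      simp only []
      rw [Equiv.swap_mul_self, map_one]
    have hsq : ψ (τ i * τ (i+1)) ^ 2 = 1 := by
      rw [map_mul, sq, mul_assoc, ← mul_assoc (ψ (τ (i+1))), ← hmulcomm]
      rw [mul_assoc (ψ (τ i)), ← mul_assoc]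
      rw [show (ψ (τ i) * ψ (τ i) * (ψ (τ (i+1)) * ψ (τ (i+1)))) =
        (ψ (τ i) * ψ (τ i)) * (ψ (τ (i+1)) * ψ (τ (i+1))) from by group]
      rw [hswsq i (by omega), hswsq (i+1) (by omega), one_mul]
    have hcube : ψ (τ i * τ (i+1)) ^ 3 = 1 := by
      rw [← map_pow]
      have : (τ i * τ (i+1)) ^ 3 = 1 := by
        rw [hτ]
        simp only []
        rw [show F (i + 1 + 1) = F (i + 2) from rfl]
        exact PhiAux.swap_cube
          (Fne i (i+1) (by omega) (by omega) (by omega))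
          (Fne (i+1) (i+2) (by omega) (by omega) (by omega))
          (Fne i (i+2) (by omega) (by omega) (by omega))
      rw [this, map_one]
    have hone : ψ (τ i * τ (i+1)) = 1 := by
      have h3 := hcube
      rw [pow_succ, hsq, one_mul] at h3
      exact h3
    have hτone : τ i * τ (i+1) = 1 := (injective_iff_map_eq_one ψ).mp hinj _ hone
    have := congrArg (fun p : Equiv.Perm (Fin (n+3)) => p (F (i+2))) hτone
    simp only [Equiv.Perm.mul_apply, Equiv.Perm.one_apply, hτ] at this
    rw [show F (i + 1 + 1) = F (i + 2) from rfl, Equiv.swap_apply_right,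
      Equiv.swap_apply_right] at this
    exact (Fne i (i+2) (by omega) (by omega) (by omega)) this
  -- linear independence of the n+2 vectors: contradiction with dim = n
  have hli : LinearIndependent (ZMod 3) (fun i : Fin (n+2) => u (i : ℕ)) := by
    rw [Fintype.linearIndependent_iff]
    intro c hc i0
    set e : ℕ → ZMod 3 := fun i => if h : i < n + 2 then c ⟨i, h⟩ else 0 with he
    set bb : ℕ → ZMod 3 := fun i => oForm n (u i) (u (i + 1)) with hbb
    have hbb1 : ∀ i, i + 1 < n + 2 → bb i * bb i = 1 := by
      intro i h
      have hne := hGadj i h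
      have : ∀ z : ZMod 3, z ≠ 0 → z * z = 1 := by decide
      exact this _ hne
    have hDdef0 : True := trivial
    have hbbdef : ∀ i, bb i = oForm n (u i) (u (i + 1)) := fun i => rfl
    have hei : ∀ i : Fin (n+2), e (i : ℕ) = c i := by
      intro i
      simp only [he]
      rw [dif_pos i.isLt]
    -- the triangular equations
    have tri : ∀ j, j < n + 2 →
        (if 1 ≤ j then e (j-1) * bb (j-1) else 0) + 2 * e j
          + (if j + 1 < n + 2 then e (j+1) * bb j else 0) = 0 := by
      intro j hj
      have h0 : oForm n (∑ i : Fin (n+2), c i • u (i : ℕ)) (u j) = 0 := by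
        rw [hc, PhiAux.oForm_zero_left]
      rw [PhiAux.oForm_sum_left] at h0
      have h1 : ∑ i : Fin (n+2), e (i : ℕ) * oForm n (u (i : ℕ)) (u j) = 0 := by
        rw [← h0]
        apply Finset.sum_congr rfl
        intro i _
        rw [PhiAux.oForm_smul_left, hei i]
      rw [Fin.sum_univ_eq_sum_range (fun i => e i * oForm n (u i) (u j)) (n+2)] at h1
      have h3 : ∀ i ∈ Finset.range (n+2), e i * oForm n (u i) (u j) =
          (if i = j - 1 ∧ 1 ≤ j then e (j-1) * bb (j-1) else 0)
          + (if i = j then 2 * e j else 0)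
          + (if i = j + 1 then e (j+1) * bb j else 0) := by
        intro i hi
        rw [Finset.mem_range] at hi
        rcases eq_or_ne i j with rfl | hij
        · rw [hu2 i hj]
          have c1 : ¬(i = i - 1 ∧ 1 ≤ i) := by omega
          have c3 : ¬(i = i + 1) := by omega
          rw [if_neg c1, if_pos rfl, if_neg c3]
          ring
        rcases (by omega : i + 1 = j ∨ i = j + 1 ∨ (i + 2 ≤ j ∨ j + 2 ≤ i)) with h | h | h
        · have c1 : i = j - 1 ∧ 1 ≤ j := by omega
          have c2 : ¬ i = j := hij
          have c3 : ¬ i = j + 1 := by omega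
          rw [if_pos c1, if_neg c2, if_neg c3, add_zero, add_zero]
          have hji : j - 1 = i := by omega
          rw [hbbdef, hji, h]
        · have c1 : ¬(i = j - 1 ∧ 1 ≤ j) := by omega
          have c3 : i = j + 1 := h
          rw [if_neg c1, if_pos c3, if_neg hij, zero_add, zero_add]
          rw [hbbdef, PhiAux.oForm_comm (u i) (u j), h]
        · have c1 : ¬(i = j - 1 ∧ 1 ≤ j) := by omega
          have c3 : ¬ i = j + 1 := by omega
          rw [if_neg c1, if_neg hij, if_neg c3]
          rcases h with h | h
          · rw [hG0 i j hj h, mul_zero]; ring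
          · rw [PhiAux.oForm_comm, hG0 j i hi h, mul_zero]; ring
      rw [Finset.sum_congr rfl h3, Finset.sum_add_distrib, Finset.sum_add_distrib] at h1
      rw [Finset.sum_ite_eq' (Finset.range (n+2)) j (fun _ => 2 * e j)] at h1
      rw [Finset.sum_ite_eq' (Finset.range (n+2)) (j+1) (fun _ => e (j+1) * bb j)] at h1
      have hsum1 : (∑ i ∈ Finset.range (n+2), if i = j - 1 ∧ 1 ≤ j then e (j-1) * bb (j-1) else 0)
          = if 1 ≤ j then e (j-1) * bb (j-1) else 0 := by
        by_cases h1j : 1 ≤ j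
        · rw [if_pos h1j]
          have hiff : ∀ i : ℕ, (i = j - 1 ∧ 1 ≤ j) = (i = j - 1) := fun i => by simp [h1j]
          simp only [hiff]
          rw [Finset.sum_ite_eq' (Finset.range (n+2)) (j-1) (fun _ => e (j-1) * bb (j-1))]
          rw [if_pos (Finset.mem_range.mpr (by omega))]
        · rw [if_neg h1j]
          have hiff : ∀ i : ℕ, (i = j - 1 ∧ 1 ≤ j) = False := fun i => by simp [h1j]
          simp only [hiff, if_false, Finset.sum_const_zero]
      rw [hsum1] at h1
      rw [if_pos (Finset.mem_range.mpr hj)] at h1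
      by_cases h2j : j + 1 < n + 2
      · rw [if_pos (Finset.mem_range.mpr h2j)] at h1
        rw [if_pos h2j]
        exact h1
      · rw [if_neg (fun hm => h2j (Finset.mem_range.mp hm))] at h1
        rw [if_neg h2j]
        exact h1
    -- solve the recurrence
    set Pr : ℕ → ZMod 3 := fun i => ∏ l ∈ Finset.range i, bb l with hPr
    have hPrs : ∀ i, Pr (i + 1) = Pr i * bb i := fun i => Finset.prod_range_succ _ _
    have hPr0 : Pr 0 = 1 := Finset.prod_range_zero _
    have hPr2 : ∀ i, i ≤ n + 1 → Pr i * Pr i = 1 := by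
      intro i
      induction i with
      | zero => intro _; rw [hPr0, mul_one]
      | succ k ih =>
        intro h
        rw [hPrs]
        have h1 := ih (by omega)
        have h2 := hbb1 k (by omega)
        calc Pr k * bb k * (Pr k * bb k) = (Pr k * Pr k) * (bb k * bb k) := by ring
          _ = 1 := by rw [h1, h2, one_mul]
    set D : ℕ → ZMod 3 := fun i => e i * Pr i with hD
    have hDdef : ∀ i, D i = e i * Pr i := fun _ => rfl
    have hneg2 : ∀ z : ZMod 3, 2 * z = -z := by decide
    have rec0 : D 1 = D 0 := by
      have t0 := tri 0 (by omega)
      rw [if_neg (by omega), if_pos (by omega : 0 + 1 < n + 2), zero_add] at t0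
      have h1 : e 1 * bb 0 = e 0 := by
        have h2 := hneg2 (e 0)
        linear_combination t0 - h2
      rw [hDdef, hDdef, hPr0, mul_one, show (1:ℕ) = 0 + 1 from rfl, hPrs, hPr0, one_mul]
      exact h1
    have recj : ∀ j, 1 ≤ j → j + 1 < n + 2 → D (j + 1) = D j - D (j - 1) := by
      intro j h1j h2j
      have t := tri j (by omega)
      rw [if_pos h1j, if_pos h2j] at t
      have hPrj : Pr j = Pr (j-1) * bb (j-1) := by
        conv_lhs => rw [show j = (j-1) + 1 from by omega]
        rw [hPrs]
      have hbbj1 := hbb1 (j-1) (by omega)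
      have hPq := hPr2 j (by omega)
      have hmul := congrArg (fun z => z * Pr j) t
      simp only [add_mul, zero_mul] at hmul
      have e1 : e (j-1) * bb (j-1) * Pr j = D (j-1) := by
        rw [hPrj, hDdef]
        calc e (j-1) * bb (j-1) * (Pr (j-1) * bb (j-1))
            = e (j-1) * Pr (j-1) * (bb (j-1) * bb (j-1)) := by ring
          _ = e (j-1) * Pr (j-1) := by rw [hbbj1, mul_one]
      have e2 : 2 * e j * Pr j = 2 * D j := by rw [hDdef]; ring
      have e3 : e (j+1) * bb j * Pr j = D (j+1) := by
        rw [hDdef, hPrs]; ring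
      rw [e1, e2, e3] at hmul
      have hn2 := hneg2 (D j)
      linear_combination hmul - hn2
    have rectop : D (n + 1) = D n := by
      have t := tri (n+1) (by omega)
      rw [if_pos (by omega), if_neg (by omega), add_zero] at t
      simp only [Nat.add_sub_cancel] at t
      have hbbn := hbb1 n (by omega)
      have hmul := congrArg (fun z => z * Pr (n+1)) t
      simp only [add_mul, zero_mul] at hmul
      have e1 : e n * bb n * Pr (n+1) = D n := by
        rw [hPrs, hDdef]
        calc e n * bb n * (Pr n * bb n) = e n * Pr n * (bb n * bb n) := by ring
          _ = e n * Pr n := by rw [hbbn, mul_one]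
      have e2 : 2 * e (n+1) * Pr (n+1) = 2 * D (n+1) := by rw [hDdef]; ring
      rw [e1, e2] at hmul
      have hn2 := hneg2 (D (n+1))
      linear_combination hn2 - hmul
    -- the periodic solution
    have triple : ∀ q, 3*q + 2 ≤ n + 1 →
        D (3*q) = (-1)^q * D 0 ∧ D (3*q+1) = (-1)^q * D 0 ∧ D (3*q+2) = 0 := by
      intro q
      induction q with
      | zero =>
        intro _
        refine ⟨?_, ?_, ?_⟩
        · show D 0 = (-1 : ZMod 3)^0 * D 0
          rw [pow_zero, one_mul]
        · show D 1 = (-1 : ZMod 3)^0 * D 0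
          rw [pow_zero, one_mul]
          exact rec0
        · show D 2 = 0
          have h2 := recj 1 (by omega) (by omega)
          simp only [Nat.sub_self] at h2
          rw [show (1+1 : ℕ) = 2 from rfl] at h2
          rw [h2, rec0, sub_self]
      | succ q ih =>
        intro h
        obtain ⟨ih0, ih1, ih2⟩ := ih (by omega)
        have r1 := recj (3*q+2) (by omega) (by omega)
        have r2 := recj (3*q+3) (by omega) (by omega)
        have r3 := recj (3*q+4) (by omega) (by omega)
        simp only [show 3*q+2-1 = 3*q+1 from by omega, show 3*q+3-1 = 3*q+2 from by omega,
          show 3*q+4-1 = 3*q+3 from by omega, show 3*q+2+1 = 3*q+3 from by omega,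
          show 3*q+3+1 = 3*q+4 from by omega, show 3*q+4+1 = 3*q+5 from by omega] at r1 r2 r3
        rw [show 3*(q+1) = 3*q+3 from by ring]
        rw [show 3*q+3+1 = 3*q+4 from by omega, show 3*q+3+2 = 3*q+5 from by omega]
        have d3 : D (3*q+3) = (-1)^(q+1) * D 0 := by
          rw [r1, ih1, ih2]; ring
        have d4 : D (3*q+4) = (-1)^(q+1) * D 0 := by
          rw [r2, d3, ih2]; ring
        have d5 : D (3*q+5) = 0 := by rw [r3, d4, d3]; ring
        exact ⟨d3, d4, d5⟩
    -- conclude D 0 = 0, hence everything vanishes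
    set q0 : ℕ := (n - 1) / 3 with hq0
    have htr := triple q0 (by omega)
    have hD0 : D 0 = 0 := by
      have h1 : D n = (-1 : ZMod 3)^q0 * D 0 := by
        rw [show n = 3*q0+1 from by omega]; exact htr.2.1
      have h2 : D (n+1) = 0 := by
        rw [show n + 1 = 3*q0+2 from by omega]; exact htr.2.2
      have h3 : (-1 : ZMod 3)^q0 * D 0 = 0 := by rw [← h1, ← rectop, h2]
      have h4 : ((-1 : ZMod 3)^q0) * ((-1 : ZMod 3)^q0) = 1 := by
        rw [← pow_add]
        exact Even.neg_one_pow ⟨q0, by ring⟩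
      calc D 0 = ((-1 : ZMod 3)^q0 * (-1 : ZMod 3)^q0) * D 0 := by rw [h4, one_mul]
        _ = (-1 : ZMod 3)^q0 * ((-1 : ZMod 3)^q0 * D 0) := by ring
        _ = 0 := by rw [h3, mul_zero]
    have hDall : ∀ j, j ≤ n + 1 → D j = 0 := by
      intro j hj
      have hq : 3 * (j / 3) + 2 ≤ n + 1 := by omega
      obtain ⟨t0, t1, t2⟩ := triple (j/3) hq
      rcases (by omega : j = 3*(j/3) ∨ j = 3*(j/3)+1 ∨ j = 3*(j/3)+2) with h | h | h
      · rw [h, t0, hD0, mul_zero]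
      · rw [h, t1, hD0, mul_zero]
      · rw [h, t2]
    have heall : ∀ j, j ≤ n + 1 → e j = 0 := by
      intro j hj
      have h1 := hDall j hj
      rw [hDdef] at h1
      have h2 := congrArg (fun z => z * Pr j) h1
      simp only [zero_mul] at h2
      calc e j = e j * (Pr j * Pr j) := by rw [hPr2 j hj, mul_one]
        _ = e j * Pr j * Pr j := by ring
        _ = 0 := h2
    have hfin := heall (i0 : ℕ) (by omega)
    rwa [hei i0] at hfin
  have hcard := hli.fintype_card_le_finrank
  rw [Module.finrank_pi] at hcard
  simp only [Fintype.card_fin] at hcard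
  omega

end PhiAux

namespace PhiA

def sgl (n : ℕ) (a : ℕ) (v : ZMod 3) : Fin (n+2) → ZMod 3 := fun j => if (j:ℕ) = a then v else 0

def dotp {k : ℕ} (x y : Fin k → ZMod 3) : ZMod 3 := ∑ j, x j * y j

def pv (i : ℕ) : ℕ := 3*(i/3) + (if i % 3 = 0 then 1 else if i % 3 = 1 then 0 else 2)

def row (n : ℕ) (i : ℕ) : Fin (n+2) → ZMod 3 :=
  if i + 1 < n then
    sgl n (pv i) (if i % 3 = 0 then 1 else 2)
    + sgl n (n-1) (if i % 3 = 0 then 2 else 1)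
    + sgl n n (if i % 3 = 0 then 2 else 1)
    + sgl n (n+1) (if i % 3 = 0 then 1 else 2)
  else sgl n (n-1) 1 + sgl n n 2

lemma dotp_add_left {k : ℕ} (x x' y : Fin k → ZMod 3) :
    dotp (x + x') y = dotp x y + dotp x' y := by
  unfold dotp; rw [← Finset.sum_add_distrib]
  exact Finset.sum_congr rfl fun j _ => by simp [add_mul]

lemma dotp_add_right {k : ℕ} (x y y' : Fin k → ZMod 3) :
    dotp x (y + y') = dotp x y + dotp x y' := by
  unfold dotp; rw [← Finset.sum_add_distrib]
  exact Finset.sum_congr rfl fun j _ => by simp [mul_add]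

lemma dotp_sub_right {k : ℕ} (x y y' : Fin k → ZMod 3) :
    dotp x (y - y') = dotp x y - dotp x y' := by
  unfold dotp; rw [← Finset.sum_sub_distrib]
  exact Finset.sum_congr rfl fun j _ => by simp [mul_sub]

lemma dotp_smul_right {k : ℕ} (c : ZMod 3) (x y : Fin k → ZMod 3) :
    dotp x (c • y) = c * dotp x y := by
  unfold dotp; rw [Finset.mul_sum]
  exact Finset.sum_congr rfl fun j _ => by simp [Pi.smul_apply, smul_eq_mul]; ring

lemma dotp_sum_right {k : ℕ} {ι : Type*} (s : Finset ι) (x : Fin k → ZMod 3)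
    (f : ι → Fin k → ZMod 3) :
    dotp x (∑ i ∈ s, f i) = ∑ i ∈ s, dotp x (f i) := by
  unfold dotp
  rw [Finset.sum_comm]
  apply Finset.sum_congr rfl
  intro j _
  rw [Finset.sum_apply, Finset.mul_sum]

lemma dotp_sgl_sgl {n : ℕ} (a b : ℕ) (v w : ZMod 3) :
    dotp (sgl n a v) (sgl n b w) = if a = b then (if a < n + 2 then v * w else 0) else 0 := by
  unfold dotp sgl
  rcases eq_or_ne a b with rfl | hab
  · rw [if_pos rfl]
    by_cases ha : a < n + 2
    · rw [if_pos ha, Finset.sum_eq_single (⟨a, ha⟩ : Fin (n+2))]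
      · simp
      · intro j _ hj
        have : (j : ℕ) ≠ a := fun hh => hj (Fin.ext hh)
        rw [if_neg this, zero_mul]
      · intro h; exact absurd (Finset.mem_univ _) h
    · rw [if_neg ha]
      apply Finset.sum_eq_zero
      intro j _
      have : (j : ℕ) ≠ a := fun hh => ha (hh ▸ j.isLt)
      rw [if_neg this, zero_mul]
  · rw [if_neg hab]
    apply Finset.sum_eq_zero
    intro j _
    rcases eq_or_ne ((j : ℕ)) a with h | h
    · rw [if_pos h, if_neg (fun hh => hab (h.symm.trans hh)), mul_zero]
    · rw [if_neg h, zero_mul]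

lemma sgl_sum {n : ℕ} (a : ℕ) (v : ZMod 3) (ha : a < n + 2) :
    ∑ j, sgl n a v j = v := by
  unfold sgl
  rw [Finset.sum_eq_single (⟨a, ha⟩ : Fin (n+2))]
  · simp
  · intro j _ hj
    exact if_neg fun hh => hj (Fin.ext hh)
  · intro h; exact absurd (Finset.mem_univ _) h

lemma pv_inj {i k : ℕ} (h : pv i = pv k) : i = k := by
  unfold pv at h
  rcases (by omega : i % 3 = 0 ∨ i % 3 = 1 ∨ i % 3 = 2) with h1|h1|h1 <;>
    rcases (by omega : k % 3 = 0 ∨ k % 3 = 1 ∨ k % 3 = 2) with h2|h2|h2 <;>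
    simp only [h1, h2] at h <;> norm_num at h <;> omega

lemma pv_lt {n i : ℕ} (hmod : n % 3 = 1) (h : i + 1 < n) : pv i + 1 < n := by
  unfold pv; split_ifs <;> omega

lemma pv_small {n i : ℕ} (h : i + 1 < n) : pv i < n + 2 := by
  unfold pv; split_ifs <;> omega

lemma row_sum {n : ℕ} (hn : 4 ≤ n) (i : ℕ) (hi : i < n) : ∑ j, row n i j = 0 := by
  unfold row
  by_cases hi1 : i + 1 < n
  · rw [if_pos hi1]
    simp only [Pi.add_apply]
    rw [Finset.sum_add_distrib, Finset.sum_add_distrib, Finset.sum_add_distrib,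
      sgl_sum _ _ (pv_small hi1), sgl_sum _ _ (by omega : n - 1 < n + 2),
      sgl_sum _ _ (by omega : n < n + 2), sgl_sum _ _ (by omega : n + 1 < n + 2)]
    by_cases him : i % 3 = 0 <;> simp [him] <;> decide
  · rw [if_neg hi1]
    simp only [Pi.add_apply]
    rw [Finset.sum_add_distrib, sgl_sum _ _ (by omega : n - 1 < n + 2),
      sgl_sum _ _ (by omega : n < n + 2)]
    decide


lemma row_orth {n : ℕ} (hn : 4 ≤ n) (hmod : n % 3 = 1) (i k : ℕ) (hi : i < n) (hk : k < n) :
    dotp (row n i) (row n k) = if i = k then (if i = n - 1 then 2 else 1) else 0 := by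
  have hb1 : (n - 1 : ℕ) < n + 2 := by omega
  have hb2 : (n : ℕ) < n + 2 := by omega
  have hb3 : (n + 1 : ℕ) < n + 2 := by omega
  have e1 : ¬ ((n - 1 : ℕ) = n) := by omega
  have e2 : ¬ ((n - 1 : ℕ) = n + 1) := by omega
  have e3 : ¬ ((n : ℕ) = n - 1) := by omega
  have e4 : ¬ ((n : ℕ) = n + 1) := by omega
  have e5 : ¬ ((n + 1 : ℕ) = n - 1) := by omega
  have e6 : ¬ ((n + 1 : ℕ) = n) := by omega
  unfold row
  by_cases hi1 : i + 1 < n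
  · have hpi := pv_lt hmod hi1
    have hpis := pv_small (n := n) hi1
    have f1 : ¬ (pv i = n - 1) := by omega
    have f2 : ¬ (pv i = n) := by omega
    have f3 : ¬ (pv i = n + 1) := by omega
    by_cases hk1 : k + 1 < n
    · have hpk := pv_lt hmod hk1
      have hpks := pv_small (n := n) hk1
      have g1 : ¬ ((n - 1 : ℕ) = pv k) := by omega
      have g2 : ¬ ((n : ℕ) = pv k) := by omega
      have g3 : ¬ ((n + 1 : ℕ) = pv k) := by omega
      rw [if_pos hi1, if_pos hk1]
      simp only [dotp_add_left, dotp_add_right, dotp_sgl_sgl]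
      simp only [f1, f2, f3, g1, g2, g3, e1, e2, e3, e4, e5, e6, if_false, if_true,
        hb1, hb2, hb3, hpis, if_pos rfl]
      rcases eq_or_ne i k with rfl | hik
      · rw [if_pos rfl, if_pos rfl, if_neg (by omega : ¬ i = n - 1)]
        by_cases him : i % 3 = 0 <;> simp only [him, if_true, if_false] <;> decide
      · rw [if_neg (fun h => hik (pv_inj h)), if_neg hik]
        by_cases him : i % 3 = 0 <;> by_cases hkm : k % 3 = 0 <;>
          simp only [him, hkm, if_true, if_false] <;> decide
    · rw [if_pos hi1, if_neg hk1]
      simp only [dotp_add_left, dotp_add_right, dotp_sgl_sgl]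
      simp only [f1, f2, f3, e1, e2, e3, e4, e5, e6, if_false, if_true,
        hb1, hb2, hb3, if_pos rfl]
      rw [if_neg (by omega : ¬ i = k)]
      by_cases him : i % 3 = 0 <;> simp only [him, if_true, if_false] <;> decide
  · by_cases hk1 : k + 1 < n
    · have hpk := pv_lt hmod hk1
      have hpks := pv_small (n := n) hk1
      have g1 : ¬ ((n - 1 : ℕ) = pv k) := by omega
      have g2 : ¬ ((n : ℕ) = pv k) := by omega
      rw [if_neg hi1, if_pos hk1]
      simp only [dotp_add_left, dotp_add_right, dotp_sgl_sgl]
      simp only [g1, g2, e1, e2, e3, e4, e5, e6, if_false, if_true,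
        hb1, hb2, hb3, if_pos rfl]
      rw [if_neg (by omega : ¬ i = k)]
      by_cases hkm : k % 3 = 0 <;> simp only [hkm, if_true, if_false] <;> decide
    · have hik : i = k := by omega
      subst hik
      rw [if_neg hi1]
      simp only [dotp_add_left, dotp_add_right, dotp_sgl_sgl]
      simp only [e1, e3, if_false, if_true, hb1, hb2, if_pos rfl]
      rw [if_pos (by omega : i = n - 1)]
      decide


def gw (n : ℕ) (i : Fin n) : ZMod 3 := if (i : ℕ) = n - 1 then 2 else 1

lemma gw_sq {n : ℕ} (i : Fin n) : gw n i * gw n i = 1 := by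
  unfold gw; split_ifs <;> decide

lemma oForm_eq_sum {n : ℕ} (x y : Fin n → ZMod 3) :
    oForm n x y = ∑ i, gw n i * x i * y i := by
  unfold oForm gw
  exact Finset.sum_congr rfl fun i _ => by ring

def Pmap (n : ℕ) : (Fin (n+2) → ZMod 3) →ₗ[ZMod 3] (Fin n → ZMod 3) where
  toFun x := fun i => dotp (row n (i : ℕ)) x
  map_add' x y := by funext i; exact dotp_add_right _ _ _
  map_smul' c x := by funext i; exact dotp_smul_right _ _ _

def smap (n : ℕ) : (Fin n → ZMod 3) →ₗ[ZMod 3] (Fin (n+2) → ZMod 3) where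
  toFun w := fun j => ∑ i : Fin n, gw n i * w i * row n (i : ℕ) j
  map_add' x y := by
    funext j
    rw [Pi.add_apply, ← Finset.sum_add_distrib]
    exact Finset.sum_congr rfl fun i _ => by rw [Pi.add_apply]; ring
  map_smul' c x := by
    funext j
    simp only [RingHom.id_apply, Pi.smul_apply, smul_eq_mul, Finset.mul_sum]
    exact Finset.sum_congr rfl fun i _ => by ring

def ones (n : ℕ) : Fin (n+2) → ZMod 3 := fun _ => 1

def sumL (n : ℕ) : (Fin (n+2) → ZMod 3) →ₗ[ZMod 3] ZMod 3 where
  toFun x := ∑ j, x j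
  map_add' x y := by simp [Finset.sum_add_distrib]
  map_smul' c x := by simp [Finset.mul_sum]

lemma Pmap_apply {n : ℕ} (x : Fin (n+2) → ZMod 3) (i : Fin n) :
    Pmap n x i = dotp (row n (i : ℕ)) x := rfl

lemma smap_apply {n : ℕ} (w : Fin n → ZMod 3) (j : Fin (n+2)) :
    smap n w j = ∑ i : Fin n, gw n i * w i * row n (i : ℕ) j := rfl

lemma dotp_comm {k : ℕ} (x y : Fin k → ZMod 3) : dotp x y = dotp y x := by
  unfold dotp; exact Finset.sum_congr rfl fun j _ => mul_comm _ _

lemma dotp_ones {n : ℕ} (x : Fin (n+2) → ZMod 3) : dotp x (ones n) = ∑ j, x j := by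
  unfold dotp ones; exact Finset.sum_congr rfl fun j _ => mul_one _

section Main
variable {n : ℕ} (hn : 4 ≤ n) (hmod : n % 3 = 1)

include hn hmod

lemma Pmap_row (k : Fin n) :
    Pmap n (row n (k : ℕ)) = fun i : Fin n => if i = k then gw n i else 0 := by
  funext i
  rw [Pmap_apply, row_orth hn hmod _ _ i.isLt k.isLt]
  rcases eq_or_ne i k with rfl | hik
  · rw [if_pos rfl, if_pos rfl]; rfl
  · rw [if_neg (fun h : (i:ℕ) = (k:ℕ) => hik (Fin.ext h)), if_neg hik]

lemma Pmap_ones : Pmap n (ones n) = 0 := by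
  funext i
  rw [Pmap_apply, dotp_ones, row_sum hn _ i.isLt]
  rfl

lemma sum_smap (w : Fin n → ZMod 3) : sumL n (smap n w) = 0 := by
  show (∑ j, ∑ i : Fin n, gw n i * w i * row n (i : ℕ) j) = 0
  rw [Finset.sum_comm]
  apply Finset.sum_eq_zero
  intro i _
  calc (∑ j, gw n i * w i * row n (i:ℕ) j) = gw n i * w i * ∑ j, row n (i:ℕ) j := by
        rw [Finset.mul_sum]
    _ = 0 := by rw [row_sum hn _ i.isLt, mul_zero]

lemma Pmap_smap (w : Fin n → ZMod 3) : Pmap n (smap n w) = w := by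
  funext i
  rw [Pmap_apply]
  unfold dotp
  have step : ∀ j : Fin (n+2), row n (i:ℕ) j * smap n w j
      = ∑ k : Fin n, gw n k * w k * (row n (i:ℕ) j * row n (k:ℕ) j) := by
    intro j
    rw [smap_apply, Finset.mul_sum]
    exact Finset.sum_congr rfl fun k _ => by ring
  rw [Finset.sum_congr rfl (fun j _ => step j), Finset.sum_comm]
  have inner : ∀ k : Fin n, (∑ j, gw n k * w k * (row n (i:ℕ) j * row n (k:ℕ) j))
      = gw n k * w k * dotp (row n (i:ℕ)) (row n (k:ℕ)) := by
    intro k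
    rw [← Finset.mul_sum]; rfl
  rw [Finset.sum_congr rfl (fun k _ => inner k)]
  rw [Finset.sum_eq_single i]
  · rw [row_orth hn hmod _ _ i.isLt i.isLt, if_pos rfl]
    have : (if (i:ℕ) = n - 1 then (2:ZMod 3) else 1) = gw n i := rfl
    rw [this]
    calc gw n i * w i * gw n i = w i * (gw n i * gw n i) := by ring
      _ = w i := by rw [gw_sq, mul_one]
  · intro k _ hki
    rw [row_orth hn hmod _ _ i.isLt k.isLt,
      if_neg (fun h : (i:ℕ) = (k:ℕ) => hki (Fin.ext h).symm), mul_zero]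
  · intro h; exact absurd (Finset.mem_univ _) h

lemma smap_Pmap_row (k : Fin n) : smap n (Pmap n (row n (k : ℕ))) = row n (k : ℕ) := by
  rw [Pmap_row hn hmod]
  funext j
  rw [smap_apply, Finset.sum_eq_single k]
  · rw [if_pos rfl]
    calc gw n k * gw n k * row n (k:ℕ) j = (gw n k * gw n k) * row n (k:ℕ) j := by ring
      _ = row n (k:ℕ) j := by rw [gw_sq, one_mul]
  · intro b _ hbk
    rw [if_neg hbk, mul_zero, zero_mul]
  · intro h; exact absurd (Finset.mem_univ _) h


lemma keyD (x : Fin (n+2) → ZMod 3) (hx : sumL n x = 0) :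
    ∃ c : ZMod 3, smap n (Pmap n x) = x + c • ones n := by
  classical
  set rows : Fin n → (Fin (n+2) → ZMod 3) := fun k => row n (k : ℕ) with hrows
  set fam : Fin (n+1) → (Fin (n+2) → ZMod 3) := Fin.cons (ones n) rows with hfam
  have hfam0 : fam 0 = ones n := Fin.cons_zero _ _
  have hfams : ∀ m : Fin n, fam m.succ = rows m := Fin.cons_succ _ _
  have hindep : LinearIndependent (ZMod 3) fam := by
    rw [Fintype.linearIndependent_iff]
    intro c hc
    have hc' : ∀ k : Fin n, c k.succ = 0 := by
      intro k
      have h0 : dotp (rows k) (∑ i : Fin (n+1), c i • fam i) = 0 := by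
        rw [hc]
        unfold dotp
        apply Finset.sum_eq_zero
        intro j _
        rw [Pi.zero_apply, mul_zero]
      rw [dotp_sum_right, Fin.sum_univ_succ] at h0
      have t1 : dotp (rows k) (c 0 • fam 0) = 0 := by
        rw [dotp_smul_right, hfam0, dotp_ones, hrows, row_sum hn _ k.isLt, mul_zero]
      have t2 : ∀ m : Fin n, dotp (rows k) (c m.succ • fam m.succ)
          = c m.succ * (if (k:ℕ) = (m:ℕ) then (if (k:ℕ) = n-1 then 2 else 1) else 0) := by
        intro m
        rw [dotp_smul_right, hfams m, hrows, row_orth hn hmod _ _ k.isLt m.isLt]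
      rw [t1, zero_add, Finset.sum_congr rfl (fun m _ => t2 m)] at h0
      rw [Finset.sum_eq_single k] at h0
      · rw [if_pos rfl] at h0
        revert h0
        split_ifs with hkn
        · intro h0
          have : ∀ z : ZMod 3, z * 2 = 0 → z = 0 := by decide
          exact this _ h0
        · intro h0
          rwa [mul_one] at h0
      · intro b _ hbk
        rw [if_neg (fun hh : (k:ℕ) = (b:ℕ) => hbk (Fin.ext hh).symm), mul_zero]
      · intro h; exact absurd (Finset.mem_univ _) h
    intro i
    have hcz : c 0 • ones n = 0 := by
      have h1 := hc
      rw [Fin.sum_univ_succ, hfam0] at h1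
      have hz : ∀ m : Fin n, c m.succ • fam m.succ = 0 := by
        intro m; rw [hc' m, zero_smul]
      rwa [Finset.sum_congr rfl (fun m _ => hz m), Finset.sum_const_zero, add_zero] at h1
    have hc0 : c 0 = 0 := by
      have h2 := congrFun hcz ⟨0, by omega⟩
      simpa [ones] using h2
    rcases Fin.eq_zero_or_eq_succ i with rfl | ⟨m, rfl⟩
    · exact hc0
    · exact hc' m
  set T := Submodule.span (ZMod 3) (Set.range fam) with hT
  have hTD : T ≤ LinearMap.ker (sumL n) := by
    rw [hT, Submodule.span_le]
    rintro z ⟨i, rfl⟩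
    simp only [SetLike.mem_coe, LinearMap.mem_ker]
    rcases Fin.eq_zero_or_eq_succ i with rfl | ⟨m, rfl⟩
    · rw [hfam0]
      show (∑ _j : Fin (n+2), (1:ZMod 3)) = 0
      rw [Finset.sum_const, Finset.card_univ, Fintype.card_fin, nsmul_eq_mul, mul_one]
      rw [ZMod.natCast_eq_zero_iff]
      omega
    · rw [hfams m]
      exact row_sum hn _ m.isLt
  have hkerrank : Module.finrank (ZMod 3) (LinearMap.ker (sumL n)) = n + 1 := by
    have hr := LinearMap.finrank_range_add_finrank_ker (sumL n)
    have hsurj : LinearMap.range (sumL n) = ⊤ := by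
      rw [LinearMap.range_eq_top]
      intro c
      refine ⟨Pi.single (⟨0, by omega⟩ : Fin (n+2)) c, ?_⟩
      show (∑ j, Pi.single (⟨0, by omega⟩ : Fin (n+2)) c j) = c
      rw [Finset.sum_pi_single']
      exact if_pos (Finset.mem_univ _)
    rw [hsurj, finrank_top, Module.finrank_self, Module.finrank_pi, Fintype.card_fin] at hr
    omega
  have hTrank : Module.finrank (ZMod 3) T = n + 1 := by
    rw [hT, finrank_span_eq_card hindep, Fintype.card_fin]
  have hTeq : T = LinearMap.ker (sumL n) :=
    Submodule.eq_of_le_of_finrank_le hTD (by rw [hkerrank, hTrank])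
  have hxT : x ∈ T := by rw [hTeq]; exact LinearMap.mem_ker.mpr hx
  clear hx
  induction hxT using Submodule.span_induction with
  | mem z hz =>
    obtain ⟨i, rfl⟩ := hz
    rcases Fin.eq_zero_or_eq_succ i with rfl | ⟨m, rfl⟩
    · refine ⟨-1, ?_⟩
      rw [hfam0, Pmap_ones hn hmod, map_zero]
      funext j
      show (0 : ZMod 3) = 1 + (-1 : ZMod 3) • 1
      decide
    · refine ⟨0, ?_⟩
      rw [hfams m, hrows, smap_Pmap_row hn hmod m, zero_smul, add_zero]
  | zero => exact ⟨0, by rw [map_zero, map_zero, zero_smul, add_zero]⟩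
  | add y z _ _ hy hz =>
    obtain ⟨cy, hcy⟩ := hy
    obtain ⟨cz, hcz⟩ := hz
    refine ⟨cy + cz, ?_⟩
    rw [map_add, map_add, hcy, hcz, add_smul]
    abel
  | smul a y _ hy =>
    obtain ⟨cy, hcy⟩ := hy
    refine ⟨a * cy, ?_⟩
    rw [map_smul, map_smul, hcy, smul_add, smul_smul]

end Main

lemma dotp_single {k : ℕ} (x : Fin k → ZMod 3) (a : Fin k) (c : ZMod 3) :
    dotp x (Pi.single a c) = x a * c := by
  unfold dotp
  rw [Finset.sum_eq_single a]
  · rw [Pi.single_eq_same]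
  · intro j _ hj; rw [Pi.single_eq_of_ne hj, mul_zero]
  · intro h; exact absurd (Finset.mem_univ _) h

lemma dotp_smap {n : ℕ} (x : Fin (n+2) → ZMod 3) (u : Fin n → ZMod 3) :
    dotp x (smap n u) = ∑ i : Fin n, gw n i * u i * dotp (row n (i:ℕ)) x := by
  unfold dotp
  have hterm : ∀ j, x j * smap n u j = ∑ i : Fin n, gw n i * u i * (row n (i:ℕ) j * x j) := by
    intro j
    rw [smap_apply, Finset.mul_sum]
    exact Finset.sum_congr rfl fun i _ => by ring
  rw [Finset.sum_congr rfl (fun j _ => hterm j), Finset.sum_comm]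
  exact Finset.sum_congr rfl fun i _ => (Finset.mul_sum _ _ _).symm

lemma oForm_Pmap_right {n : ℕ} (u : Fin n → ZMod 3) (x : Fin (n+2) → ZMod 3) :
    oForm n u (Pmap n x) = dotp x (smap n u) := by
  rw [oForm_eq_sum, dotp_smap]
  exact Finset.sum_congr rfl fun i _ => rfl

def permL (n : ℕ) (σ : Equiv.Perm (Fin (n+2))) :
    (Fin (n+2) → ZMod 3) →ₗ[ZMod 3] (Fin (n+2) → ZMod 3) where
  toFun x := fun j => x (σ⁻¹ j)
  map_add' x y := rfl
  map_smul' c x := rfl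

lemma permL_apply {n : ℕ} (σ : Equiv.Perm (Fin (n+2))) (x : Fin (n+2) → ZMod 3)
    (j : Fin (n+2)) : permL n σ x j = x (σ⁻¹ j) := rfl

lemma permL_sum {n : ℕ} (σ : Equiv.Perm (Fin (n+2))) (x : Fin (n+2) → ZMod 3) :
    sumL n (permL n σ x) = sumL n x := by
  show (∑ j, x (σ⁻¹ j)) = ∑ j, x j
  exact Equiv.sum_comp σ⁻¹ x

lemma permL_mul {n : ℕ} (σ τ : Equiv.Perm (Fin (n+2))) (x : Fin (n+2) → ZMod 3) :
    permL n (σ * τ) x = permL n σ (permL n τ x) := by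
  funext j
  show x ((σ * τ)⁻¹ j) = x (τ⁻¹ (σ⁻¹ j))
  rw [mul_inv_rev]
  rfl

lemma permL_one {n : ℕ} (x : Fin (n+2) → ZMod 3) : permL n 1 x = x := rfl

lemma permL_ones {n : ℕ} (σ : Equiv.Perm (Fin (n+2))) : permL n σ (ones n) = ones n := rfl

def Psi (n : ℕ) (σ : Equiv.Perm (Fin (n+2))) :
    (Fin n → ZMod 3) →ₗ[ZMod 3] (Fin n → ZMod 3) :=
  (Pmap n) ∘ₗ (permL n σ) ∘ₗ (smap n)

lemma Psi_apply {n : ℕ} (σ : Equiv.Perm (Fin (n+2))) (w : Fin n → ZMod 3) :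
    Psi n σ w = Pmap n (permL n σ (smap n w)) := rfl

lemma exists_notin {k : ℕ} (s : Finset (Fin k)) (hs : s.card < k) : ∃ x : Fin k, x ∉ s := by
  by_contra hcon
  push_neg at hcon
  have h1 : (Finset.univ : Finset (Fin k)) ⊆ s := fun x _ => hcon x
  have h2 := Finset.card_le_card h1
  simp [Finset.card_univ] at h2
  omega

section Main2
variable {n : ℕ} (hn : 4 ≤ n) (hmod : n % 3 = 1)

include hn hmod

lemma Psi_one (w : Fin n → ZMod 3) : Psi n 1 w = w := by
  rw [Psi_apply, permL_one, Pmap_smap hn hmod]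

lemma Psi_mul (σ τ : Equiv.Perm (Fin (n+2))) (w : Fin n → ZMod 3) :
    Psi n (σ * τ) w = Psi n σ (Psi n τ w) := by
  obtain ⟨c, hc⟩ := keyD hn hmod (permL n τ (smap n w))
    (by rw [permL_sum]; exact sum_smap hn hmod w)
  rw [Psi_apply (σ*τ), Psi_apply, Psi_apply, hc]
  rw [map_add (permL n σ), map_smul (permL n σ)]
  rw [map_add (Pmap n), map_smul (Pmap n), permL_ones, Pmap_ones hn hmod, smul_zero,
    add_zero, permL_mul]

lemma Psi_step1 (σ : Equiv.Perm (Fin (n+2))) (hσ : ∀ w, Psi n σ w = w) :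
    ∀ x, sumL n x = 0 → ∃ c : ZMod 3, permL n σ x = x + c • ones n := by
  have hs : ∀ w, ∃ c : ZMod 3, permL n σ (smap n w) = smap n w + c • ones n := by
    intro w
    have h1 : sumL n (permL n σ (smap n w) - smap n w) = 0 := by
      rw [map_sub, permL_sum, sum_smap hn hmod, sub_zero]
    have h2 : Pmap n (permL n σ (smap n w) - smap n w) = 0 := by
      rw [map_sub, Pmap_smap hn hmod]
      have h3 : Pmap n (permL n σ (smap n w)) = Psi n σ w := rfl
      rw [h3, hσ w, sub_self]
    obtain ⟨c, hc⟩ := keyD hn hmod _ h1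
    rw [h2, map_zero] at hc
    have h5 : permL n σ (smap n w) - smap n w = -(c • ones n) :=
      eq_neg_of_add_eq_zero_left hc.symm
    refine ⟨-c, ?_⟩
    calc permL n σ (smap n w) = smap n w + (permL n σ (smap n w) - smap n w) := by abel
      _ = smap n w + -(c • ones n) := by rw [h5]
      _ = smap n w + (-c) • ones n := by rw [neg_smul]
  intro x hx
  obtain ⟨c1, hc1⟩ := keyD hn hmod x hx
  obtain ⟨c2, hc2⟩ := hs (Pmap n x)
  refine ⟨c2, ?_⟩
  have hxe : x = smap n (Pmap n x) - c1 • ones n := by rw [hc1]; abel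
  conv_lhs => rw [hxe]
  rw [map_sub, map_smul, hc2, permL_ones]
  conv_rhs => rw [hxe]
  abel

lemma Psi_step2 (σ : Equiv.Perm (Fin (n+2))) (hσ : ∀ w, Psi n σ w = w) : σ = 1 := by
  have hstep := Psi_step1 hn hmod σ hσ
  apply Equiv.ext
  intro a
  simp only [Equiv.Perm.one_apply]
  by_contra hab
  have hba : σ a ≠ a := hab
  obtain ⟨cc, hcc⟩ := exists_notin ({a, σ a, σ⁻¹ (σ a), σ⁻¹ a} : Finset (Fin (n+2))) (by
    have h1 : ({a, σ a, σ⁻¹ (σ a), σ⁻¹ a} : Finset (Fin (n+2))).card ≤ 4 := by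
      apply le_trans (Finset.card_insert_le _ _)
      apply Nat.succ_le_succ
      apply le_trans (Finset.card_insert_le _ _)
      apply Nat.succ_le_succ
      apply le_trans (Finset.card_insert_le _ _)
      apply Nat.succ_le_succ
      exact le_of_eq (Finset.card_singleton _)
    omega)
  simp only [Finset.mem_insert, Finset.mem_singleton, not_or] at hcc
  obtain ⟨hc1, hc2, hc3, hc4⟩ := hcc
  set x : Fin (n+2) → ZMod 3 := Pi.single a 1 - Pi.single cc 1 with hx
  have hxval : ∀ j : Fin (n+2), x j = (if j = a then 1 else 0) - (if j = cc then 1 else 0) := by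
    intro j
    rw [hx]
    simp [Pi.single_apply]
  have hsx : sumL n x = 0 := by
    show (∑ j, x j) = 0
    rw [Finset.sum_congr rfl (fun j _ => hxval j), Finset.sum_sub_distrib,
      Finset.sum_ite_eq' Finset.univ a (fun _ => (1:ZMod 3)),
      Finset.sum_ite_eq' Finset.univ cc (fun _ => (1:ZMod 3))]
    simp
  obtain ⟨c0, hc0⟩ := hstep x hsx
  have hσia : σ⁻¹ (σ a) = a := σ.symm_apply_apply a
  have hvb := congrFun hc0 (σ a)
  rw [permL_apply, hσia] at hvb
  have hLb : x a = 1 := by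
    rw [hxval]
    rw [if_pos rfl, if_neg (fun h : a = cc => hc1 h.symm)]
    decide
  have hxb : x (σ a) = 0 := by
    rw [hxval]
    rw [if_neg hba, if_neg (fun h : σ a = cc => hc2 h.symm)]
    decide
  rw [hLb] at hvb
  have hc01 : c0 = 1 := by
    rw [Pi.add_apply, hxb, Pi.smul_apply] at hvb
    simp only [ones, smul_eq_mul, mul_one, zero_add] at hvb
    exact hvb.symm
  -- pick a fresh coordinate
  obtain ⟨j0, hj0⟩ := exists_notin ({a, cc, σ a, σ cc} : Finset (Fin (n+2))) (by
    have h1 : ({a, cc, σ a, σ cc} : Finset (Fin (n+2))).card ≤ 4 := by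
      apply le_trans (Finset.card_insert_le _ _)
      apply Nat.succ_le_succ
      apply le_trans (Finset.card_insert_le _ _)
      apply Nat.succ_le_succ
      apply le_trans (Finset.card_insert_le _ _)
      apply Nat.succ_le_succ
      exact le_of_eq (Finset.card_singleton _)
    omega)
  simp only [Finset.mem_insert, Finset.mem_singleton, not_or] at hj0
  obtain ⟨hj1, hj2, hj3, hj4⟩ := hj0
  have hvj := congrFun hc0 j0
  rw [permL_apply] at hvj
  have hL0 : x (σ⁻¹ j0) = 0 := by
    rw [hxval]
    rw [if_neg, if_neg]
    · decide
    · intro h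
      exact hj4 (by rw [← h]; exact (σ.apply_symm_apply j0).symm)
    · intro h
      exact hj3 (by rw [← h]; exact (σ.apply_symm_apply j0).symm)
  have hxj0 : x j0 = 0 := by
    rw [hxval, if_neg hj1, if_neg hj2]
    decide
  rw [hL0, Pi.add_apply, hxj0, Pi.smul_apply, hc01] at hvj
  simp only [ones, smul_eq_mul, mul_one, zero_add] at hvj
  exact absurd hvj.symm (by decide)

end Main2

theorem partA (n : ℕ) (hn : 4 ≤ n) (hmod : n % 3 = 1) :
    ∃ ψ : Equiv.Perm (Fin (n + 2)) →* ((Fin n → ZMod 3) ≃ₗ[ZMod 3] (Fin n → ZMod 3)),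
      Function.Injective ψ ∧
      ∀ τ : Equiv.Perm (Fin (n + 2)), τ.IsSwap →
        ∃ v : Fin n → ZMod 3, oForm n v v = 2 ∧
          ∀ w, (ψ τ) w = w - oForm n w v • v := by
  have comp_id : ∀ σ : Equiv.Perm (Fin (n+2)), (Psi n σ) ∘ₗ (Psi n σ⁻¹) = LinearMap.id := by
    intro σ
    apply LinearMap.ext
    intro w
    show Psi n σ (Psi n σ⁻¹ w) = w
    rw [← Psi_mul hn hmod, mul_inv_cancel, Psi_one hn hmod]
  set Ψ : Equiv.Perm (Fin (n+2)) → ((Fin n → ZMod 3) ≃ₗ[ZMod 3] (Fin n → ZMod 3)) :=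
    fun σ => LinearEquiv.ofLinear (Psi n σ) (Psi n σ⁻¹) (comp_id σ)
      (by have := comp_id σ⁻¹; rwa [inv_inv] at this) with hΨ
  have hΨapp : ∀ σ w, Ψ σ w = Psi n σ w := fun σ w => rfl
  refine ⟨{ toFun := Ψ, map_one' := ?_, map_mul' := ?_ }, ?_, ?_⟩
  · apply LinearEquiv.ext
    intro w
    rw [hΨapp]
    exact Psi_one hn hmod w
  · intro σ τ
    apply LinearEquiv.ext
    intro w
    show Ψ (σ * τ) w = (Ψ σ * Ψ τ) w
    rw [hΨapp, Psi_mul hn hmod]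
    rfl
  · rw [injective_iff_map_eq_one]
    intro σ hσ1
    apply Psi_step2 hn hmod σ
    intro w
    have h2 : Ψ σ = 1 := hσ1
    have h3 : Ψ σ w = w := by rw [h2]; rfl
    rw [hΨapp] at h3
    exact h3
  · rintro τs ⟨a, b, hab, rfl⟩
    set x0 : Fin (n+2) → ZMod 3 := Pi.single a 1 - Pi.single b 1 with hx0
    have hx0val : ∀ j : Fin (n+2), x0 j = (if j = a then 1 else 0) - (if j = b then 1 else 0) := by
      intro j
      rw [hx0]
      simp [Pi.single_apply]
    have hsum0 : sumL n x0 = 0 := by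
      show (∑ j, x0 j) = 0
      rw [Finset.sum_congr rfl (fun j _ => hx0val j), Finset.sum_sub_distrib,
        Finset.sum_ite_eq' Finset.univ a (fun _ => (1:ZMod 3)),
        Finset.sum_ite_eq' Finset.univ b (fun _ => (1:ZMod 3))]
      simp
    set v : Fin n → ZMod 3 := Pmap n x0 with hv
    have hswapL : ∀ x : Fin (n+2) → ZMod 3,
        permL n (Equiv.swap a b) x = x - (x a - x b) • x0 := by
      intro x
      funext j
      rw [permL_apply, Equiv.swap_inv]
      simp only [Pi.sub_apply, Pi.smul_apply, smul_eq_mul, hx0, Pi.single_apply]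
      rcases eq_or_ne j a with rfl | hja
      · rw [Equiv.swap_apply_left, if_pos rfl, if_neg hab]
        ring
      rcases eq_or_ne j b with rfl | hjb
      · rw [Equiv.swap_apply_right, if_neg (fun h : j = a => hab h.symm), if_pos rfl]
        ring
      · rw [Equiv.swap_apply_of_ne_of_ne hja hjb, if_neg hja, if_neg hjb]
        ring
    have hident : ∀ w, smap n w a - smap n w b = oForm n w v := by
      intro w
      rw [hv, oForm_Pmap_right, dotp_comm, hx0, dotp_sub_right, dotp_single, dotp_single,
        mul_one, mul_one]
    have hform : ∀ w, Psi n (Equiv.swap a b) w = w - oForm n w v • v := by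
      intro w
      rw [Psi_apply, hswapL (smap n w), map_sub, map_smul, Pmap_smap hn hmod, hident w, hv]
    have hvv : oForm n v v = 2 := by
      obtain ⟨c, hc⟩ := keyD hn hmod x0 hsum0
      rw [hv, oForm_Pmap_right, hc, dotp_add_right, dotp_smul_right, dotp_ones]
      have h1 : (∑ j, x0 j) = 0 := hsum0
      rw [h1, mul_zero, add_zero, hx0, dotp_sub_right, dotp_single, dotp_single,
        mul_one, mul_one]
      simp only [Pi.sub_apply, Pi.single_apply, if_pos rfl, if_neg hab,
        if_neg (fun h : b = a => hab h.symm)]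
      decide
    exact ⟨v, hvv, fun w => by
      show Ψ (Equiv.swap a b) w = w - oForm n w v • v
      rw [hΨapp]
      exact hform w⟩

end PhiA

/-- φ(O_n^{-,+}(3)) = n + 2 when n ≡ 1 (mod 3): S_{n+2} embeds with transpositions going to reflections t_v with B(v,v) = 2, while S_{n+3} does not. -/
theorem phi_O_minus_plus_3_mod_one (n : ℕ) (hn : 4 ≤ n) (hmod : n % 3 = 1) :
    (∃ ψ : Equiv.Perm (Fin (n + 2)) →* ((Fin n → ZMod 3) ≃ₗ[ZMod 3] (Fin n → ZMod 3)),
      Function.Injective ψ ∧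
      ∀ τ : Equiv.Perm (Fin (n + 2)), τ.IsSwap →
        ∃ v : Fin n → ZMod 3, oForm n v v = 2 ∧
          ∀ w, (ψ τ) w = w - oForm n w v • v) ∧
    ¬ (∃ ψ : Equiv.Perm (Fin (n + 3)) →* ((Fin n → ZMod 3) ≃ₗ[ZMod 3] (Fin n → ZMod 3)),
      Function.Injective ψ ∧
      ∀ τ : Equiv.Perm (Fin (n + 3)), τ.IsSwap →
        ∃ v : Fin n → ZMod 3, oForm n v v = 2 ∧
          ∀ w, (ψ τ) w = w - oForm n w v • v) :=
  ⟨PhiA.partA n hn hmod, PhiAux.partB n hn hmod⟩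
end

section
/- Let n ≥ 5 with n ≡ 2 (mod 3), and let V = (Fin n → ZMod 3) with the symmetric bilinear form B(x,y) = Σ_{i=1}^{n−1} x_i y_i + 2 x_n y_n (Gram determinant −1, i.e., type '−'). Then: (a) there exists an injective group homomorphism ψ from the symmetric group S_{n+1} to the group of linear automorphisms of V such that for every transposition τ ∈ S_{n+1}, ψ(τ) is a reflection t_v for some v ∈ V with B(v,v) = 2; and (b) there is no injective group homomorphism from S_{n+2} to the linear automorphisms of V sending every transposition to such a reflection. (Equivalently, φ(O_n^{−,+}(3)) = n+1 when n ≡ 2 (mod 3).) -/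
open Finset

section basic
variable {n : ℕ}

lemma oForm_comm (x y : Fin n → ZMod 3) : oForm n x y = oForm n y x := by
  unfold oForm; congr 1; funext i; ring

lemma oForm_add_left (x y z : Fin n → ZMod 3) :
    oForm n (x + y) z = oForm n x z + oForm n y z := by
  unfold oForm; rw [← Finset.sum_add_distrib]; congr 1; funext i
  simp only [Pi.add_apply]; ring

lemma oForm_sub_left (x y z : Fin n → ZMod 3) :
    oForm n (x - y) z = oForm n x z - oForm n y z := by
  unfold oForm; rw [← Finset.sum_sub_distrib]; congr 1; funext i
  simp only [Pi.sub_apply]; ring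

lemma oForm_smul_left (c : ZMod 3) (x z : Fin n → ZMod 3) :
    oForm n (c • x) z = c * oForm n x z := by
  unfold oForm; rw [Finset.mul_sum]; congr 1; funext i
  simp only [Pi.smul_apply, smul_eq_mul]; ring

lemma oForm_add_right (x y z : Fin n → ZMod 3) :
    oForm n x (y + z) = oForm n x y + oForm n x z := by
  rw [oForm_comm, oForm_add_left, oForm_comm y x, oForm_comm z x]

lemma oForm_sub_right (x y z : Fin n → ZMod 3) :
    oForm n x (y - z) = oForm n x y - oForm n x z := by
  rw [oForm_comm, oForm_sub_left, oForm_comm y x, oForm_comm z x]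

lemma oForm_smul_right (c : ZMod 3) (x z : Fin n → ZMod 3) :
    oForm n x (c • z) = c * oForm n x z := by
  rw [oForm_comm, oForm_smul_left, oForm_comm z x]

lemma oForm_zero_left (z : Fin n → ZMod 3) : oForm n 0 z = 0 := by
  unfold oForm; apply Finset.sum_eq_zero; intro i _; simp

lemma oForm_sum_left {ι : Type*} [DecidableEq ι] (s : Finset ι) (f : ι → Fin n → ZMod 3) (y : Fin n → ZMod 3) :
    oForm n (∑ k ∈ s, f k) y = ∑ k ∈ s, oForm n (f k) y := by
  induction s using Finset.induction_on with
  | empty => simp [oForm_zero_left]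
  | @insert a s' ha ih => rw [Finset.sum_insert ha, Finset.sum_insert ha, oForm_add_left, ih]

end basic

section helpers
variable {m : ℕ}

lemma sum_if_const (c : Fin m) (a b : ZMod 3) :
    ∑ i : Fin m, (if i = c then a else b) = (m : ZMod 3) * b + (a - b) := by
  have h : ∀ i : Fin m, (if i = c then a else b) = b + (if i = c then a - b else 0) := by
    intro i; split_ifs <;> ring
  rw [Finset.sum_congr rfl fun i _ => h i, Finset.sum_add_distrib,
    Finset.sum_ite_eq' univ c, Finset.sum_const, card_univ, Fintype.card_fin]
  simp [nsmul_eq_mul]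

lemma sum_eq_two {M : Type*} [AddCommMonoid M] {F : Fin m → M} (c d : Fin m) (hcd : c ≠ d)
    (h0 : ∀ x, x ≠ c → x ≠ d → F x = 0) : ∑ x, F x = F c + F d := by
  rw [show ∑ x, F x = ∑ x ∈ ({c, d} : Finset (Fin m)), F x from
    (Finset.sum_subset (Finset.subset_univ _) (by
      intro x _ hx
      simp only [Finset.mem_insert, Finset.mem_singleton] at hx
      push_neg at hx
      exact h0 x hx.1 hx.2)).symm]
  exact Finset.sum_pair hcd

lemma sum_eq_three {M : Type*} [AddCommMonoid M] {F : Fin m → M} (c d e : Fin m)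
    (hcd : c ≠ d) (hce : c ≠ e) (hde : d ≠ e)
    (h0 : ∀ x, x ≠ c → x ≠ d → x ≠ e → F x = 0) : ∑ x, F x = F c + F d + F e := by
  rw [show ∑ x, F x = ∑ x ∈ ({c, d, e} : Finset (Fin m)), F x from
    (Finset.sum_subset (Finset.subset_univ _) (by
      intro x _ hx
      simp only [Finset.mem_insert, Finset.mem_singleton] at hx
      push_neg at hx
      exact h0 x hx.1 hx.2.1 hx.2.2)).symm]
  rw [Finset.sum_insert (by simp [hcd, hce]), Finset.sum_pair hde, add_assoc]

lemma sum_ind (c : Fin m) (f : Fin m → ZMod 3) :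
    ∑ i : Fin m, (if i = c then f i else 0) = f c := by
  rw [Finset.sum_ite_eq' univ c]; simp

end helpers

section partA

open Finset

def uu (n : ℕ) : Fin (n+1) → Fin n → ZMod 3 := fun k i =>
  if (k:ℕ) = n - 1 then 1
  else if (k:ℕ) = n then (if (i:ℕ) = n - 1 then -1 else 1)
  else if (i:ℕ) = (k:ℕ) then 1 else 0

def ccA (n : ℕ) : Fin (n+1) → ZMod 3 := fun k => if (k:ℕ) = n - 1 ∨ (k:ℕ) = n then 1 else 0

lemma natCast_n (n : ℕ) (hmod : n % 3 = 2) : ((n : ℕ) : ZMod 3) = 2 := by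
  have h : n = 3 * (n / 3) + 2 := by omega
  rw [h]
  push_cast
  rw [show (3 : ZMod 3) = 0 by decide]
  ring

lemma gram {n : ℕ} (hn : 5 ≤ n) (hmod : n % 3 = 2) (k l : Fin (n+1)) :
    oForm n (uu n k) (uu n l) = (if k = l then 1 else 0) + ccA n k + ccA n l := by
  have hn3 : ((n : ℕ) : ZMod 3) = 2 := natCast_n n hmod
  have hkb := k.isLt
  have hlb := l.isLt
  set In1 : Fin n := ⟨n-1, by omega⟩ with hIn1
  unfold oForm uu ccA
  by_cases hk1 : (k:ℕ) = n-1 <;> by_cases hk2 : (k:ℕ) = n <;>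
    by_cases hl1 : (l:ℕ) = n-1 <;> by_cases hl2 : (l:ℕ) = n <;>
    first | (exfalso; omega) | skip
  -- (1,1)
  · rw [if_pos (Fin.ext (hk1.trans hl1.symm) : k = l), if_pos (Or.inl hk1), if_pos (Or.inl hl1)]
    rw [Finset.sum_congr rfl (fun i _ => by simp only [if_pos hk1, if_pos hl1, mul_one]; rfl)]
    have hco : ∀ i : Fin n, (if (i:ℕ) = n-1 then (2:ZMod 3) else 1) = (if i = In1 then 2 else 1) := by
      intro i
      by_cases h : (i:ℕ) = n - 1
      · rw [if_pos h, if_pos (Fin.ext h : i = In1)]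
      · rw [if_neg h, if_neg (show ¬(i = In1) from fun hh => h (by rw [hh]))]
    rw [Finset.sum_congr rfl (fun i _ => hco i), sum_if_const In1 2 1, hn3]
    decide
  -- (1,2)
  · rw [if_neg (fun h : k = l => by have := congrArg Fin.val h; omega),
      if_pos (Or.inl hk1), if_pos (Or.inr hl2)]
    rw [Finset.sum_congr rfl (fun i _ => by simp only [if_pos hk1, if_neg hl1, if_pos hl2, one_mul]; rfl)]
    have hco : ∀ i : Fin n, (if (i:ℕ) = n-1 then (2:ZMod 3) else 1) * (if (i:ℕ) = n-1 then -1 else 1)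
        = (if i = In1 then -2 else 1) := by
      intro i
      by_cases h : (i:ℕ) = n - 1
      · rw [if_pos h, if_pos h, if_pos (Fin.ext h : i = In1)]; ring
      · rw [if_neg h, if_neg h, if_neg (show ¬(i = In1) from fun hh => h (by rw [hh]))]; ring
    rw [Finset.sum_congr rfl (fun i _ => hco i), sum_if_const In1 (-2) 1, hn3]
    decide
  -- (1,3)
  · rw [if_neg (fun h : k = l => by have := congrArg Fin.val h; omega),
      if_pos (Or.inl hk1), if_neg (show ¬((l:ℕ) = n-1 ∨ (l:ℕ) = n) from by push_neg; exact ⟨hl1, hl2⟩)]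
    have hl3 : (l:ℕ) < n := by omega
    set Il : Fin n := ⟨(l:ℕ), hl3⟩ with hIl
    rw [Finset.sum_congr rfl (fun i _ => by simp only [if_pos hk1, if_neg hl1, if_neg hl2, one_mul]; rfl)]
    have hco : ∀ i : Fin n, (if (i:ℕ) = n-1 then (2:ZMod 3) else 1) * (if (i:ℕ) = (l:ℕ) then 1 else 0)
        = (if i = Il then 1 else 0) := by
      intro i
      by_cases h : (i:ℕ) = (l:ℕ)
      · rw [if_pos h, if_pos (Fin.ext h : i = Il), if_neg (show ¬((i:ℕ) = n-1) by omega)]; ring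
      · rw [if_neg h, if_neg (show ¬(i = Il) from fun hh => h (by rw [hh]))]; ring
    rw [Finset.sum_congr rfl (fun i _ => hco i), sum_ind Il (fun _ => 1)]
    decide
  -- (2,1)
  · rw [if_neg (fun h : k = l => by have := congrArg Fin.val h; omega),
      if_pos (Or.inr hk2), if_pos (Or.inl hl1)]
    rw [Finset.sum_congr rfl (fun i _ => by simp only [if_neg hk1, if_pos hk2, if_pos hl1, mul_one]; rfl)]
    have hco : ∀ i : Fin n, (if (i:ℕ) = n-1 then (2:ZMod 3) else 1) * (if (i:ℕ) = n-1 then -1 else 1)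
        = (if i = In1 then -2 else 1) := by
      intro i
      by_cases h : (i:ℕ) = n - 1
      · rw [if_pos h, if_pos h, if_pos (Fin.ext h : i = In1)]; ring
      · rw [if_neg h, if_neg h, if_neg (show ¬(i = In1) from fun hh => h (by rw [hh]))]; ring
    rw [Finset.sum_congr rfl (fun i _ => hco i), sum_if_const In1 (-2) 1, hn3]
    decide
  -- (2,2)
  · rw [if_pos (Fin.ext (hk2.trans hl2.symm) : k = l), if_pos (Or.inr hk2), if_pos (Or.inr hl2)]
    rw [Finset.sum_congr rfl (fun i _ => by simp only [if_neg hk1, if_pos hk2, if_neg hl1, if_pos hl2]; rfl)]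
    have hco : ∀ i : Fin n, (if (i:ℕ) = n-1 then (2:ZMod 3) else 1) *
        ((if (i:ℕ) = n-1 then -1 else 1) * (if (i:ℕ) = n-1 then -1 else 1))
        = (if i = In1 then 2 else 1) := by
      intro i
      by_cases h : (i:ℕ) = n - 1
      · rw [if_pos h, if_pos h, if_pos (Fin.ext h : i = In1)]; ring
      · rw [if_neg h, if_neg h, if_neg (show ¬(i = In1) from fun hh => h (by rw [hh]))]; ring
    rw [Finset.sum_congr rfl (fun i _ => hco i), sum_if_const In1 2 1, hn3]
    decide
  -- (2,3)
  · rw [if_neg (fun h : k = l => by have := congrArg Fin.val h; omega),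
      if_pos (Or.inr hk2), if_neg (show ¬((l:ℕ) = n-1 ∨ (l:ℕ) = n) from by push_neg; exact ⟨hl1, hl2⟩)]
    have hl3 : (l:ℕ) < n := by omega
    set Il : Fin n := ⟨(l:ℕ), hl3⟩ with hIl
    rw [Finset.sum_congr rfl (fun i _ => by simp only [if_neg hk1, if_pos hk2, if_neg hl1, if_neg hl2]; rfl)]
    have hco : ∀ i : Fin n, (if (i:ℕ) = n-1 then (2:ZMod 3) else 1) *
        ((if (i:ℕ) = n-1 then -1 else 1) * (if (i:ℕ) = (l:ℕ) then 1 else 0))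
        = (if i = Il then 1 else 0) := by
      intro i
      by_cases h : (i:ℕ) = (l:ℕ)
      · rw [if_pos h, if_pos (Fin.ext h : i = Il), if_neg (show ¬((i:ℕ) = n-1) by omega),
          if_neg (show ¬((i:ℕ) = n-1) by omega)]; ring
      · rw [if_neg h, if_neg (show ¬(i = Il) from fun hh => h (by rw [hh]))]; ring
    rw [Finset.sum_congr rfl (fun i _ => hco i), sum_ind Il (fun _ => 1)]
    decide
  -- (3,1)
  · rw [if_neg (fun h : k = l => by have := congrArg Fin.val h; omega),
      if_neg (show ¬((k:ℕ) = n-1 ∨ (k:ℕ) = n) from by push_neg; exact ⟨hk1, hk2⟩),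
      if_pos (Or.inl hl1)]
    have hk3 : (k:ℕ) < n := by omega
    set Ik : Fin n := ⟨(k:ℕ), hk3⟩ with hIk
    rw [Finset.sum_congr rfl (fun i _ => by simp only [if_neg hk1, if_neg hk2, if_pos hl1, mul_one]; rfl)]
    have hco : ∀ i : Fin n, (if (i:ℕ) = n-1 then (2:ZMod 3) else 1) * (if (i:ℕ) = (k:ℕ) then 1 else 0)
        = (if i = Ik then 1 else 0) := by
      intro i
      by_cases h : (i:ℕ) = (k:ℕ)
      · rw [if_pos h, if_pos (Fin.ext h : i = Ik), if_neg (show ¬((i:ℕ) = n-1) by omega)]; ring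
      · rw [if_neg h, if_neg (show ¬(i = Ik) from fun hh => h (by rw [hh]))]; ring
    rw [Finset.sum_congr rfl (fun i _ => hco i), sum_ind Ik (fun _ => 1)]
    decide
  -- (3,2)
  · rw [if_neg (fun h : k = l => by have := congrArg Fin.val h; omega),
      if_neg (show ¬((k:ℕ) = n-1 ∨ (k:ℕ) = n) from by push_neg; exact ⟨hk1, hk2⟩),
      if_pos (Or.inr hl2)]
    have hk3 : (k:ℕ) < n := by omega
    set Ik : Fin n := ⟨(k:ℕ), hk3⟩ with hIk
    rw [Finset.sum_congr rfl (fun i _ => by simp only [if_neg hk1, if_neg hk2, if_neg hl1, if_pos hl2]; rfl)]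
    have hco : ∀ i : Fin n, (if (i:ℕ) = n-1 then (2:ZMod 3) else 1) *
        ((if (i:ℕ) = (k:ℕ) then 1 else 0) * (if (i:ℕ) = n-1 then -1 else 1))
        = (if i = Ik then 1 else 0) := by
      intro i
      by_cases h : (i:ℕ) = (k:ℕ)
      · rw [if_pos h, if_pos (Fin.ext h : i = Ik), if_neg (show ¬((i:ℕ) = n-1) by omega),
          if_neg (show ¬((i:ℕ) = n-1) by omega)]; ring
      · rw [if_neg h, if_neg (show ¬(i = Ik) from fun hh => h (by rw [hh]))]; ring
    rw [Finset.sum_congr rfl (fun i _ => hco i), sum_ind Ik (fun _ => 1)]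
    decide
  -- (3,3)
  · rw [if_neg (show ¬((k:ℕ) = n-1 ∨ (k:ℕ) = n) from by push_neg; exact ⟨hk1, hk2⟩),
      if_neg (show ¬((l:ℕ) = n-1 ∨ (l:ℕ) = n) from by push_neg; exact ⟨hl1, hl2⟩)]
    have hk3 : (k:ℕ) < n := by omega
    set Ik : Fin n := ⟨(k:ℕ), hk3⟩ with hIk
    rw [Finset.sum_congr rfl (fun i _ => by simp only [if_neg hk1, if_neg hk2, if_neg hl1, if_neg hl2]; rfl)]
    by_cases hv : (k:ℕ) = (l:ℕ)
    · rw [if_pos (Fin.ext hv : k = l)]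
      have hco : ∀ i : Fin n, (if (i:ℕ) = n-1 then (2:ZMod 3) else 1) *
          ((if (i:ℕ) = (k:ℕ) then 1 else 0) * (if (i:ℕ) = (l:ℕ) then 1 else 0))
          = (if i = Ik then 1 else 0) := by
        intro i
        by_cases h : (i:ℕ) = (k:ℕ)
        · rw [if_pos h, if_pos (show (i:ℕ) = (l:ℕ) by omega), if_pos (Fin.ext h : i = Ik),
            if_neg (show ¬((i:ℕ) = n-1) by omega)]; ring
        · rw [if_neg h, if_neg (show ¬(i = Ik) from fun hh => h (by rw [hh]))]; ring
      rw [Finset.sum_congr rfl (fun i _ => hco i), sum_ind Ik (fun _ => 1)]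
      decide
    · rw [if_neg (fun h : k = l => hv (congrArg Fin.val h))]
      have hco : ∀ i : Fin n, (if (i:ℕ) = n-1 then (2:ZMod 3) else 1) *
          ((if (i:ℕ) = (k:ℕ) then 1 else 0) * (if (i:ℕ) = (l:ℕ) then 1 else 0))
          = 0 := by
        intro i
        by_cases h : (i:ℕ) = (k:ℕ)
        · rw [if_pos h, if_neg (show ¬((i:ℕ) = (l:ℕ)) by omega)]; ring
        · rw [if_neg h]; ring
      rw [Finset.sum_congr rfl (fun i _ => hco i), Finset.sum_const_zero]
      decide

end partA

section partA2

open Finset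

def Pl (n : ℕ) : (Fin (n+1) → ZMod 3) →ₗ[ZMod 3] (Fin n → ZMod 3) where
  toFun x := ∑ k, x k • uu n k
  map_add' x y := by
    simp only [Pi.add_apply, add_smul]
    rw [Finset.sum_add_distrib]
  map_smul' c x := by
    simp only [Pi.smul_apply, smul_eq_mul, RingHom.id_apply]
    rw [Finset.smul_sum]
    exact Finset.sum_congr rfl fun k _ => mul_smul c (x k) (uu n k)

def Rl (n : ℕ) : (Fin n → ZMod 3) →ₗ[ZMod 3] (Fin (n+1) → ZMod 3) where
  toFun w := fun k => oForm n w (uu n k)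
  map_add' x y := by funext k; exact oForm_add_left x y (uu n k)
  map_smul' c x := by funext k; exact oForm_smul_left c x (uu n k)

def compL (n : ℕ) (σ : Equiv.Perm (Fin (n+1))) :
    (Fin (n+1) → ZMod 3) →ₗ[ZMod 3] (Fin (n+1) → ZMod 3) where
  toFun x := x ∘ σ
  map_add' x y := rfl
  map_smul' c x := rfl

def psiL (n : ℕ) (σ : Equiv.Perm (Fin (n+1))) : (Fin n → ZMod 3) →ₗ[ZMod 3] (Fin n → ZMod 3) :=
  LinearMap.id + (Pl n).comp ((compL n σ⁻¹).comp (Rl n)) - (Pl n).comp (Rl n)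

lemma psiL_apply (n : ℕ) (σ : Equiv.Perm (Fin (n+1))) (w : Fin n → ZMod 3) :
    psiL n σ w = w + Pl n (Rl n w ∘ ⇑σ⁻¹) - Pl n (Rl n w) := rfl

lemma Pl_apply (n : ℕ) (x : Fin (n+1) → ZMod 3) : Pl n x = ∑ k, x k • uu n k := rfl

lemma Rl_apply (n : ℕ) (w : Fin n → ZMod 3) (k : Fin (n+1)) : Rl n w k = oForm n w (uu n k) := rfl

lemma Pl_j {n : ℕ} (hn : 5 ≤ n) (hmod : n % 3 = 2) :
    Pl n (fun _ => 1) = 0 := by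
  rw [Pl_apply]
  simp only [one_smul]
  funext i
  rw [Finset.sum_apply]
  simp only [Pi.zero_apply]
  set K1 : Fin (n+1) := ⟨n-1, by omega⟩ with hK1
  set K2 : Fin (n+1) := ⟨n, by omega⟩ with hK2
  have hK12 : K1 ≠ K2 := fun h => by have := congrArg Fin.val h; simp [hK1, hK2] at this; omega
  by_cases hi : (i:ℕ) = n-1
  · rw [sum_eq_two K1 K2 hK12 (fun x hx1 hx2 => by
      have hx1' : (x:ℕ) ≠ n-1 := fun h => hx1 (Fin.ext h)
      have hx2' : (x:ℕ) ≠ n := fun h => hx2 (Fin.ext h)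
      unfold uu
      rw [if_neg hx1', if_neg hx2', if_neg (show ¬((i:ℕ) = (x:ℕ)) from by have := x.isLt; omega)])]
    unfold uu
    rw [if_pos (show (K1:ℕ) = n-1 from rfl), if_neg (show ¬((K2:ℕ) = n-1) from by simp [hK2]; omega),
      if_pos (show (K2:ℕ) = n from rfl), if_pos hi]
    decide
  · have hi' : (i:ℕ) < n := i.isLt
    set Ki : Fin (n+1) := ⟨(i:ℕ), by omega⟩ with hKi
    have h1 : Ki ≠ K1 := fun h => by have := congrArg Fin.val h; simp [hKi, hK1] at this; omega
    have h2 : Ki ≠ K2 := fun h => by have := congrArg Fin.val h; simp [hKi, hK2] at this; omega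
    rw [sum_eq_three K1 K2 Ki hK12 (Ne.symm h1) (Ne.symm h2) (fun x hx1 hx2 hx3 => by
      have hx1' : (x:ℕ) ≠ n-1 := fun h => hx1 (Fin.ext h)
      have hx2' : (x:ℕ) ≠ n := fun h => hx2 (Fin.ext h)
      have hx3' : (x:ℕ) ≠ (i:ℕ) := fun h => hx3 (Fin.ext (h.symm : (i:ℕ) = (x:ℕ)).symm)
      unfold uu
      rw [if_neg hx1', if_neg hx2', if_neg (show ¬((i:ℕ) = (x:ℕ)) from fun h => hx3' h.symm)])]
    unfold uu
    rw [if_pos (show (K1:ℕ) = n-1 from rfl), if_neg (show ¬((K2:ℕ) = n-1) from by simp [hK2]; omega),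
      if_pos (show (K2:ℕ) = n from rfl), if_neg hi,
      if_neg (show ¬((Ki:ℕ) = n-1) from hi), if_neg (show ¬((Ki:ℕ) = n) from by simp [hKi]; omega),
      if_pos (show (i:ℕ) = (Ki:ℕ) from rfl)]
    decide

lemma Pl_e (n : ℕ) (p : Fin (n+1)) :
    Pl n (fun k => if k = p then 1 else 0) = uu n p := by
  rw [Pl_apply]
  rw [Finset.sum_congr rfl (fun k _ => by
    rw [ite_smul, one_smul, zero_smul])]
  rw [Finset.sum_ite_eq' univ p (fun k => uu n k)]
  exact if_pos (Finset.mem_univ p)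

lemma RlPl {n : ℕ} (hn : 5 ≤ n) (hmod : n % 3 = 2) (x : Fin (n+1) → ZMod 3)
    (hx : ∑ k, x k = 0) :
    Rl n (Pl n x) = x + (x ⟨n-1, by omega⟩ + x ⟨n, by omega⟩) • ((fun _ => 1) : Fin (n+1) → ZMod 3) := by
  set K1 : Fin (n+1) := ⟨n-1, by omega⟩ with hK1
  set K2 : Fin (n+1) := ⟨n, by omega⟩ with hK2
  have hK12 : K1 ≠ K2 := fun h => by have := congrArg Fin.val h; simp [hK1, hK2] at this; omega
  funext k
  rw [Rl_apply, Pl_apply, oForm_sum_left]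
  rw [Finset.sum_congr rfl (fun l _ => by
    rw [oForm_smul_left, gram hn hmod l k])]
  have hccl : ∀ l : Fin (n+1), x l * ccA n l
      = (if l = K1 then x l else 0) + (if l = K2 then x l else 0) := by
    intro l
    unfold ccA
    by_cases h2 : l = K1 <;> by_cases h3 : l = K2
    · exact absurd (h2.symm.trans h3) hK12
    · rw [if_pos h2, if_neg h3,
        if_pos (Or.inl (congrArg Fin.val h2 : (l:ℕ) = n-1))]
      ring
    · rw [if_neg h2, if_pos h3,
        if_pos (Or.inr (congrArg Fin.val h3 : (l:ℕ) = n))]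
      ring
    · rw [if_neg h2, if_neg h3, if_neg (show ¬((l:ℕ) = n-1 ∨ (l:ℕ) = n) from by
        push_neg
        exact ⟨fun h => h2 (Fin.ext h), fun h => h3 (Fin.ext h)⟩)]
      ring
  have hsplit : ∀ l : Fin (n+1), x l * ((if l = k then 1 else 0) + ccA n l + ccA n k) =
      (if l = k then x l else 0) + ((if l = K1 then x l else 0) + (if l = K2 then x l else 0))
      + x l * ccA n k := by
    intro l
    rw [mul_add, mul_add, mul_ite, mul_one, mul_zero, hccl l]
  rw [Finset.sum_congr rfl (fun l _ => hsplit l), Finset.sum_add_distrib, Finset.sum_add_distrib,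
    Finset.sum_add_distrib]
  rw [Finset.sum_ite_eq' univ k (fun l => x l), Finset.sum_ite_eq' univ K1 (fun l => x l),
    Finset.sum_ite_eq' univ K2 (fun l => x l)]
  rw [← Finset.sum_mul, hx, zero_mul]
  rw [if_pos (Finset.mem_univ k), if_pos (Finset.mem_univ K1), if_pos (Finset.mem_univ K2)]
  simp only [Pi.add_apply, Pi.smul_apply, smul_eq_mul, mul_one]
  ring

lemma Pl_swap (n : ℕ) (a b : Fin (n+1)) (hab : a ≠ b) (x : Fin (n+1) → ZMod 3) :
    Pl n (x ∘ (Equiv.swap a b)) = Pl n x + (x a - x b) • (uu n b - uu n a) := by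
  rw [Pl_apply, Pl_apply]
  have e1 : ∑ k, (x ∘ (Equiv.swap a b)) k • uu n k = ∑ k, x k • uu n ((Equiv.swap a b) k) := by
    have := Equiv.sum_comp (Equiv.swap a b) (fun k => x k • uu n ((Equiv.swap a b) k))
    simp only [Equiv.swap_apply_self] at this
    exact this
  rw [e1]
  have e2 : ∀ k, x k • uu n ((Equiv.swap a b) k) = x k • uu n k + x k • (uu n ((Equiv.swap a b) k) - uu n k) := by
    intro k
    rw [smul_sub]
    abel
  rw [Finset.sum_congr rfl (fun k _ => e2 k), Finset.sum_add_distrib]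
  have e3 : ∑ k, x k • (uu n ((Equiv.swap a b) k) - uu n k)
      = x a • (uu n b - uu n a) + x b • (uu n a - uu n b) := by
    rw [sum_eq_two a b hab (fun k hka hkb => by
      rw [Equiv.swap_apply_of_ne_of_ne hka hkb, sub_self, smul_zero])]
    rw [Equiv.swap_apply_left, Equiv.swap_apply_right]
  rw [e3]
  congr 1
  module

lemma psiL_one (n : ℕ) : psiL n 1 = LinearMap.id := by
  apply LinearMap.ext
  intro w
  rw [psiL_apply]
  simp only [inv_one, Equiv.Perm.coe_one, Function.comp_id]
  simp

lemma psiL_mul {n : ℕ} (hn : 5 ≤ n) (hmod : n % 3 = 2) (σ τ : Equiv.Perm (Fin (n+1))) :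
    psiL n (σ * τ) = (psiL n σ).comp (psiL n τ) := by
  apply LinearMap.ext
  intro w
  rw [LinearMap.comp_apply, psiL_apply, psiL_apply]
  set y := Rl n w with hy
  set x : Fin (n+1) → ZMod 3 := (y ∘ ⇑τ⁻¹) - y with hxdef
  have hsum : ∑ k, x k = 0 := by
    simp only [hxdef, Pi.sub_apply, Finset.sum_sub_distrib]
    rw [show ∑ k, (y ∘ ⇑τ⁻¹) k = ∑ k, y k from Equiv.sum_comp τ⁻¹ y]
    exact sub_self _
  have hPsi_t : psiL n τ w = w + Pl n x := by
    rw [psiL_apply, hxdef, map_sub]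
    abel
  set t : ZMod 3 := x ⟨n-1, by omega⟩ + x ⟨n, by omega⟩ with ht
  have hR : Rl n (psiL n τ w) = y + (x + t • ((fun _ => 1) : Fin (n+1) → ZMod 3)) := by
    rw [hPsi_t, map_add, RlPl hn hmod x hsum]
  rw [hR]
  have hdist : (y + (x + t • ((fun _ => 1) : Fin (n+1) → ZMod 3))) ∘ ⇑σ⁻¹
      = y ∘ ⇑σ⁻¹ + (x ∘ ⇑σ⁻¹ + t • ((fun _ => 1) : Fin (n+1) → ZMod 3)) := rfl
  rw [hdist]
  have hcomp : x ∘ ⇑σ⁻¹ = y ∘ ⇑(σ * τ)⁻¹ - y ∘ ⇑σ⁻¹ := by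
    funext k
    simp only [hxdef, Function.comp_apply, Pi.sub_apply, mul_inv_rev, Equiv.Perm.mul_apply]
  rw [hcomp]
  simp only [map_add, map_sub, map_smul, Pl_j hn hmod, smul_zero]
  rw [hPsi_t, hxdef, map_sub]
  abel

end partA2

section partA3

open Finset

lemma uu_other {n : ℕ} (r : Fin (n+1)) (hr1 : (r:ℕ) ≠ n-1) (hr2 : (r:ℕ) ≠ n) (i : Fin n) :
    uu n r i = if (i:ℕ) = (r:ℕ) then 1 else 0 := by
  unfold uu; rw [if_neg hr1, if_neg hr2]

lemma uu_K1v {n : ℕ} (r : Fin (n+1)) (hr : (r:ℕ) = n-1) (i : Fin n) : uu n r i = 1 := by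
  unfold uu; rw [if_pos hr]

lemma uu_K2v {n : ℕ} (hn : 5 ≤ n) (r : Fin (n+1)) (hr : (r:ℕ) = n) (i : Fin n) :
    uu n r i = if (i:ℕ) = n-1 then -1 else 1 := by
  unfold uu; rw [if_neg (by omega), if_pos hr]

lemma uu_mem01 {n : ℕ} (hn : 5 ≤ n) (r : Fin (n+1)) (i : Fin n) (hi : (i:ℕ) ≠ n-1) :
    uu n r i = 0 ∨ uu n r i = 1 := by
  unfold uu
  split_ifs with h1 h2 h3 h4 <;>
    first | exact Or.inr rfl | exact Or.inl rfl | exact absurd ‹(i:ℕ) = n-1› hi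

lemma uu_inj {n : ℕ} (hn : 5 ≤ n) : Function.Injective (uu n) := by
  have hspec : ∀ r s : Fin (n+1), ((r:ℕ) = n-1 ∨ (r:ℕ) = n) → ¬((s:ℕ) = n-1) → ¬((s:ℕ) = n) →
      uu n r ≠ uu n s := by
    intro r s hr hs1 hs2 heq
    have hsb := s.isLt
    have hone : ∀ i : Fin n, (i:ℕ) ≠ n-1 → uu n r i = 1 := by
      intro i hi
      rcases hr with h | h
      · rw [uu_K1v r h]
      · rw [uu_K2v hn r h, if_neg hi]
    by_cases hs0 : (s:ℕ) = 0
    · have h1 := congrFun heq ⟨1, by omega⟩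
      rw [uu_other s hs1 hs2, hone ⟨1, by omega⟩ (by simp [Fin.val_mk]; omega)] at h1
      rw [if_neg (by simp [Fin.val_mk]; omega)] at h1
      exact one_ne_zero h1
    · have h1 := congrFun heq ⟨0, by omega⟩
      rw [uu_other s hs1 hs2, hone ⟨0, by omega⟩ (by simp [Fin.val_mk]; omega)] at h1
      rw [if_neg (by simp [Fin.val_mk]; omega)] at h1
      exact one_ne_zero h1
  intro p q h
  have hpb := p.isLt
  have hqb := q.isLt
  by_cases hp1 : (p:ℕ) = n-1 <;> by_cases hp2 : (p:ℕ) = n <;>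
    by_cases hq1 : (q:ℕ) = n-1 <;> by_cases hq2 : (q:ℕ) = n <;>
    first | (exfalso; omega) | skip
  · exact Fin.ext (by omega)
  · exfalso
    have h1 := congrFun h ⟨n-1, by omega⟩
    rw [uu_K1v p hp1, uu_K2v hn q hq2, if_pos (by simp [Fin.val_mk])] at h1
    exact absurd h1 (by decide)
  · exact absurd h (hspec p q (Or.inl hp1) hq1 hq2)
  · exfalso
    have h1 := congrFun h ⟨n-1, by omega⟩
    rw [uu_K1v q hq1, uu_K2v hn p hp2, if_pos (by simp [Fin.val_mk])] at h1
    exact absurd h1 (by decide)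
  · exact Fin.ext (by omega)
  · exact absurd h (hspec p q (Or.inr hp2) hq1 hq2)
  · exact absurd h.symm (hspec q p (Or.inl hq1) hp1 hp2)
  · exact absurd h.symm (hspec q p (Or.inr hq2) hp1 hp2)
  · -- both generic
    have h1 := congrFun h ⟨(p:ℕ), by omega⟩
    rw [uu_other p hp1 hp2, uu_other q hq1 hq2, if_pos rfl] at h1
    by_cases hv : (p:ℕ) = (q:ℕ)
    · exact Fin.ext hv
    · rw [if_neg (by simp [Fin.val_mk]; omega)] at h1
      exact absurd h1 (by decide)

lemma ite_comm_eq {n : ℕ} (a b : Fin (n+1)) :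
    (if a = b then (1 : ZMod 3) else 0) = (if b = a then 1 else 0) := by
  by_cases h : a = b
  · rw [if_pos h, if_pos h.symm]
  · rw [if_neg h, if_neg (fun hh => h hh.symm)]

lemma partA (n : ℕ) (hn : 5 ≤ n) (hmod : n % 3 = 2) :
    ∃ ψ : Equiv.Perm (Fin (n + 1)) →* ((Fin n → ZMod 3) ≃ₗ[ZMod 3] (Fin n → ZMod 3)),
      Function.Injective ψ ∧
      ∀ τ : Equiv.Perm (Fin (n + 1)), τ.IsSwap →
        ∃ v : Fin n → ZMod 3, oForm n v v = 2 ∧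
          ∀ w, (ψ τ) w = w - oForm n w v • v := by
  refine ⟨{
    toFun := fun σ => LinearEquiv.ofLinear (psiL n σ) (psiL n σ⁻¹)
      (by rw [← psiL_mul hn hmod, mul_inv_cancel]; exact psiL_one n)
      (by rw [← psiL_mul hn hmod, inv_mul_cancel]; exact psiL_one n),
    map_one' := by
      apply LinearEquiv.toLinearMap_injective
      apply LinearMap.ext
      intro w
      show psiL n 1 w = w
      rw [psiL_one]
      rfl,
    map_mul' := fun σ τ => by
      apply LinearEquiv.toLinearMap_injective
      apply LinearMap.ext
      intro w
      show psiL n (σ * τ) w = psiL n σ (psiL n τ w)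
      rw [psiL_mul hn hmod]
      rfl }, ?_, ?_⟩
  · -- injectivity
    rw [injective_iff_map_eq_one]
    intro σ hσ
    have hfix : ∀ w, psiL n σ w = w := by
      intro w
      exact congrArg (fun (e : (Fin n → ZMod 3) ≃ₗ[ZMod 3] (Fin n → ZMod 3)) => e w) hσ
    have hPeq : ∀ w : Fin n → ZMod 3, Pl n (Rl n w ∘ ⇑σ⁻¹) = Pl n (Rl n w) := by
      intro w
      have h := hfix w
      rw [psiL_apply] at h
      have h2 : Pl n (Rl n w ∘ ⇑σ⁻¹) - Pl n (Rl n w) = 0 := by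
        linear_combination (norm := module) h
      rw [sub_eq_zero] at h2
      exact h2
    have hRw : ∀ p q : Fin (n+1), Rl n (uu n p - uu n q)
        = ((fun k => if k = p then 1 else 0) - (fun k => if k = q then 1 else 0)
          + (ccA n p - ccA n q) • ((fun _ => 1) : Fin (n+1) → ZMod 3)) := by
      intro p q
      funext k
      rw [show Rl n (uu n p - uu n q) = Rl n (uu n p) - Rl n (uu n q) from map_sub _ _ _]
      simp only [Pi.add_apply, Pi.sub_apply, Pi.smul_apply, smul_eq_mul, mul_one]
      rw [Rl_apply, Rl_apply, gram hn hmod p k, gram hn hmod q k, ite_comm_eq p k, ite_comm_eq q k]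
      ring
    have key : ∀ p q : Fin (n+1), uu n (σ p) - uu n (σ q) = uu n p - uu n q := by
      intro p q
      have h2 := hPeq (uu n p - uu n q)
      rw [hRw p q] at h2
      have hcomp : (((fun k => if k = p then (1:ZMod 3) else 0)
            - (fun k => if k = q then 1 else 0)
            + (ccA n p - ccA n q) • ((fun _ => 1) : Fin (n+1) → ZMod 3)) ∘ ⇑σ⁻¹)
          = ((fun k => if k = σ p then (1:ZMod 3) else 0)
            - (fun k => if k = σ q then 1 else 0)
            + (ccA n p - ccA n q) • ((fun _ => 1) : Fin (n+1) → ZMod 3)) := by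
        funext k
        simp only [Function.comp_apply, Pi.add_apply, Pi.sub_apply, Pi.smul_apply, smul_eq_mul,
          mul_one]
        have e1 : (if σ⁻¹ k = p then (1:ZMod 3) else 0) = (if k = σ p then 1 else 0) := by
          by_cases h : σ⁻¹ k = p
          · rw [if_pos h, if_pos (by rw [← h]; exact (Equiv.apply_symm_apply σ k).symm)]
          · rw [if_neg h, if_neg (fun hh => h (by rw [hh]; exact Equiv.symm_apply_apply σ p))]
        have e2 : (if σ⁻¹ k = q then (1:ZMod 3) else 0) = (if k = σ q then 1 else 0) := by
          by_cases h : σ⁻¹ k = q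
          · rw [if_pos h, if_pos (by rw [← h]; exact (Equiv.apply_symm_apply σ k).symm)]
          · rw [if_neg h, if_neg (fun hh => h (by rw [hh]; exact Equiv.symm_apply_apply σ q))]
        rw [e1, e2]
      rw [hcomp] at h2
      simp only [map_add, map_sub, map_smul, Pl_e, Pl_j hn hmod, smul_zero, add_zero] at h2
      exact h2
    -- conclude σ = 1
    ext p
    simp only [Equiv.Perm.coe_one, id_eq]
    set K0 : Fin (n+1) := ⟨0, by omega⟩ with hK0
    by_cases hq : σ K0 = K0
    · have hdp := key p K0
      rw [hq] at hdp
      have huu : uu n (σ p) = uu n p := by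
        linear_combination (norm := module) hdp
      exact congrArg Fin.val (uu_inj hn huu)
    · exfalso
      set K1' : Fin (n+1) := ⟨1, by omega⟩ with hK1'
      have hK0v : (K0:ℕ) = 0 := rfl
      have hK1'v : (K1':ℕ) = 1 := rfl
      have hkey := key K1' K0
      have hval : ∀ i : Fin n, uu n (σ K1') i = uu n K1' i - uu n K0 i + uu n (σ K0) i := by
        intro i
        have := congrFun hkey i
        simp only [Pi.sub_apply] at this
        linear_combination this
      have hqv := (σ K0).isLt
      by_cases hq2 : ((σ K0 : ℕ) = n-1 ∨ (σ K0 : ℕ) = n)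
      · -- evaluate at coordinate 1
        set I1 : Fin n := ⟨1, by omega⟩ with hI1
        have hI1v : (I1:ℕ) = 1 := rfl
        have h1 := hval I1
        have ha : uu n K1' I1 = 1 := by
          rw [uu_other K1' (by rw [hK1'v]; omega) (by rw [hK1'v]; omega), if_pos rfl]
        have hb : uu n K0 I1 = 0 := by
          rw [uu_other K0 (by rw [hK0v]; omega) (by rw [hK0v]; omega),
            if_neg (show ¬((I1:ℕ) = (K0:ℕ)) from by rw [hI1v, hK0v]; omega)]
        have hc : uu n (σ K0) I1 = 1 := by
          rcases hq2 with h | h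
          · rw [uu_K1v _ h]
          · rw [uu_K2v hn _ h, if_neg (by rw [hI1v]; omega)]
        rw [ha, hb, hc] at h1
        rcases uu_mem01 hn (σ K1') I1 (by rw [hI1v]; omega) with h | h <;> rw [h1] at h <;>
          exact absurd h (by decide)
      · -- σ K0 is generic and nonzero
        push_neg at hq2
        set I0 : Fin n := ⟨0, by omega⟩ with hI0
        have hI0v : (I0:ℕ) = 0 := rfl
        have h1 := hval I0
        have ha : uu n K1' I0 = 0 := by
          rw [uu_other K1' (by rw [hK1'v]; omega) (by rw [hK1'v]; omega),
            if_neg (show ¬((I0:ℕ) = (K1':ℕ)) from by rw [hI0v, hK1'v]; omega)]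
        have hb : uu n K0 I0 = 1 := by
          rw [uu_other K0 (by rw [hK0v]; omega) (by rw [hK0v]; omega), if_pos rfl]
        have hc : uu n (σ K0) I0 = 0 := by
          rw [uu_other (σ K0) hq2.1 hq2.2, if_neg (by
            rw [hI0v]
            intro hh
            exact hq (Fin.ext (by rw [hK0v]; omega)))]
        rw [ha, hb, hc] at h1
        rcases uu_mem01 hn (σ K1') I0 (by rw [hI0v]; omega) with h | h <;> rw [h1] at h <;>
          exact absurd h (by decide)
  · -- swaps go to reflections
    rintro t ⟨x, y, hxy, rfl⟩
    refine ⟨uu n x - uu n y, ?_, ?_⟩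
    · rw [oForm_sub_left, oForm_sub_right, oForm_sub_right, gram hn hmod, gram hn hmod,
        gram hn hmod, gram hn hmod, if_pos rfl, if_pos rfl, if_neg hxy, if_neg (Ne.symm hxy)]
      ring
    · intro w
      show psiL n (Equiv.swap x y) w = w - oForm n w (uu n x - uu n y) • (uu n x - uu n y)
      rw [psiL_apply, Equiv.swap_inv, Pl_swap n x y hxy (Rl n w)]
      rw [show Rl n w x = oForm n w (uu n x) from rfl, show Rl n w y = oForm n w (uu n y) from rfl,
        oForm_sub_right]
      module

end partA3

section helpers2

lemma swap_disjoint_comm {α : Type*} [DecidableEq α] {p q r s : α} (h1 : p ≠ r) (h2 : p ≠ s)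
    (h3 : q ≠ r) (h4 : q ≠ s) :
    Equiv.swap p q * Equiv.swap r s = Equiv.swap r s * Equiv.swap p q := by
  ext x
  simp only [Equiv.Perm.mul_apply, Equiv.swap_apply_def]
  split_ifs <;> simp_all

lemma sq_one_of_ne_zero : ∀ c : ZMod 3, c ≠ 0 → c * c = 1 := by decide

lemma sum_ind_nat {n : ℕ} (j : ℕ) (f : Fin (n+1) → ZMod 3) :
    ∑ k : Fin (n+1), (if (k:ℕ) = j then f k else 0) = if h : j ≤ n then f ⟨j, by omega⟩ else 0 := by
  split
  · rename_i h
    have hco : ∀ k : Fin (n+1), (if (k:ℕ) = j then f k else 0)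
        = (if k = (⟨j, by omega⟩ : Fin (n+1)) then f k else 0) := by
      intro k
      split_ifs <;> simp_all [Fin.ext_iff]
    rw [Finset.sum_congr rfl (fun k _ => hco k)]
    exact sum_ind _ f
  · rename_i h
    apply Finset.sum_eq_zero
    intro k _
    rw [if_neg]
    intro hk
    have := k.isLt
    omega

end helpers2

section partB

lemma partB (n : ℕ) (hn : 5 ≤ n) (hmod : n % 3 = 2) :
    ¬ (∃ ψ : Equiv.Perm (Fin (n + 2)) →* ((Fin n → ZMod 3) ≃ₗ[ZMod 3] (Fin n → ZMod 3)),
      Function.Injective ψ ∧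
      ∀ τ : Equiv.Perm (Fin (n + 2)), τ.IsSwap →
        ∃ v : Fin n → ZMod 3, oForm n v v = 2 ∧
          ∀ w, (ψ τ) w = w - oForm n w v • v) := by
  have h30 : (3 : ZMod 3) = 0 := by decide
  rintro ⟨ψ, hinj, hswap⟩
  let a : Fin (n+1) → Fin (n+2) := fun k => ⟨k, by omega⟩
  let b : Fin (n+1) → Fin (n+2) := fun k => ⟨(k : ℕ)+1, by omega⟩
  have hav : ∀ k, (a k : ℕ) = (k : ℕ) := fun k => rfl
  have hbv : ∀ k, (b k : ℕ) = (k : ℕ) + 1 := fun k => rfl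
  have hab : ∀ k, a k ≠ b k := by
    intro k h; rw [Fin.ext_iff, hav, hbv] at h; omega
  let τ : Fin (n+1) → Equiv.Perm (Fin (n+2)) := fun k => Equiv.swap (a k) (b k)
  have hτ : ∀ k, τ k = Equiv.swap (a k) (b k) := fun k => rfl
  have hsw : ∀ k, (τ k).IsSwap := fun k => ⟨a k, b k, hab k, rfl⟩
  let v : Fin (n+1) → (Fin n → ZMod 3) := fun k => (hswap (τ k) (hsw k)).choose
  have hv2 : ∀ k, oForm n (v k) (v k) = 2 := fun k => (hswap (τ k) (hsw k)).choose_spec.1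
  have hvr : ∀ k w, ψ (τ k) w = w - oForm n w (v k) • v k :=
    fun k => (hswap (τ k) (hsw k)).choose_spec.2
  -- orthogonality of far-apart reflections
  have horth : ∀ k l : Fin (n+1), (k : ℕ) + 2 ≤ (l : ℕ) → oForm n (v k) (v l) = 0 := by
    intro k l hkl
    by_contra hc
    have hcomm : τ k * τ l = τ l * τ k := by
      rw [hτ, hτ]
      apply swap_disjoint_comm <;>
        (intro h; rw [Fin.ext_iff] at h; simp only [hav, hbv] at h; omega)
    have h1 : ∀ w, (ψ (τ k)) ((ψ (τ l)) w) = (ψ (τ l)) ((ψ (τ k)) w) := by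
      intro w
      have h := congrArg ψ hcomm
      rw [map_mul, map_mul] at h
      exact DFunLike.congr_fun (congrArg (LinearEquiv.toLinearMap) h) w
    have key : ∀ w, (oForm n w (v l) * oForm n (v l) (v k)) • v k
        = (oForm n w (v k) * oForm n (v k) (v l)) • v l := by
      intro w
      have h2 := h1 w
      rw [hvr k w, hvr l w, hvr l _, hvr k _] at h2
      rw [oForm_sub_left, oForm_smul_left, oForm_sub_left, oForm_smul_left] at h2
      linear_combination (norm := module) h2
    have hkey := key (v l)
    rw [hv2 l, oForm_comm (v l) (v k)] at hkey
    set c := oForm n (v k) (v l) with hc'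
    have hcsq : c * c = 1 := sq_one_of_ne_zero c hc
    rw [hcsq, one_smul] at hkey
    -- hkey : (2 * c) • v k = v l
    have hψeq : ψ (τ l) = ψ (τ k) := by
      apply LinearEquiv.toLinearMap_injective
      apply LinearMap.ext
      intro w
      show (ψ (τ l)) w = (ψ (τ k)) w
      rw [hvr l w, hvr k w, ← hkey, oForm_smul_right, smul_smul]
      congr 2
      linear_combination (4 * oForm n w (v k)) * hcsq + oForm n w (v k) * h30
    have hτeq : τ l = τ k := hinj hψeq
    have heval := congrArg (fun e => e (a k)) hτeq
    rw [hτ, hτ] at heval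
    have e1 : (Equiv.swap (a l) (b l)) (a k) = a k := by
      apply Equiv.swap_apply_of_ne_of_ne <;>
        (intro h; rw [Fin.ext_iff] at h; simp only [hav, hbv] at h; omega)
    have e2 : (Equiv.swap (a k) (b k)) (a k) = b k := Equiv.swap_apply_left _ _
    rw [e1, e2] at heval
    exact hab k heval
  have horth' : ∀ k l : Fin (n+1), (l : ℕ) + 2 ≤ (k : ℕ) → oForm n (v k) (v l) = 0 := by
    intro k l h; rw [oForm_comm]; exact horth l k h
  -- adjacent reflections: nonzero inner product
  have hadj : ∀ (k : ℕ) (hk : k + 1 ≤ n),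
      oForm n (v ⟨k, by omega⟩) (v ⟨k+1, by omega⟩) ≠ 0 := by
    intro k hk hc
    set k1 : Fin (n+1) := ⟨k, by omega⟩ with hk1
    set k2 : Fin (n+1) := ⟨k+1, by omega⟩ with hk2
    have hc2 : oForm n (v k2) (v k1) = 0 := by rw [oForm_comm]; exact hc
    have hgg : ψ ((τ k1 * τ k2) * (τ k1 * τ k2)) = 1 := by
      apply LinearEquiv.toLinearMap_injective
      apply LinearMap.ext
      intro w
      rw [map_mul, map_mul]
      show (ψ (τ k1)) ((ψ (τ k2)) ((ψ (τ k1)) ((ψ (τ k2)) w))) = w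
      rw [hvr, hvr, hvr, hvr]
      simp only [oForm_sub_left, oForm_smul_left, hv2, hc, hc2]
      module
    have he : (τ k1 * τ k2) * (τ k1 * τ k2) = 1 := hinj (by rw [hgg, map_one])
    have heval := congrArg (fun e => e (a k1)) he
    simp only [Equiv.Perm.mul_apply, Equiv.Perm.one_apply] at heval
    have e1 : (τ k2) (a k1) = a k1 := by
      rw [hτ]; apply Equiv.swap_apply_of_ne_of_ne <;>
        (intro h; rw [Fin.ext_iff] at h; simp only [hav, hbv, hk1, hk2, Fin.val_mk] at h; omega)
    have e2 : (τ k1) (a k1) = b k1 := by rw [hτ]; exact Equiv.swap_apply_left _ _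
    have e3 : b k1 = a k2 := by rw [Fin.ext_iff, hav, hbv]
    have e4 : (τ k2) (a k2) = b k2 := by rw [hτ]; exact Equiv.swap_apply_left _ _
    have e5 : (τ k1) (b k2) = b k2 := by
      rw [hτ]; apply Equiv.swap_apply_of_ne_of_ne <;>
        (intro h; rw [Fin.ext_iff] at h; simp only [hav, hbv, hk1, hk2, Fin.val_mk] at h; omega)
    rw [e1, e2, e3, e4, e5] at heval
    have := congrArg Fin.val heval
    rw [hbv, hav] at this
    simp only [hk1, hk2, Fin.val_mk] at this
    omega
  -- linear dependence
  have hdep : ¬ LinearIndependent (ZMod 3) v := by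
    intro h
    have := h.fintype_card_le_finrank
    rw [Module.finrank_fintype_fun_eq_card] at this
    simp [Fintype.card_fin] at this
  obtain ⟨g, hg0, i0, hgi⟩ := Fintype.not_linearIndependent_iff.mp hdep
  set C : ℕ → ZMod 3 := fun m =>
    if h : m + 1 ≤ n then oForm n (v ⟨m, by omega⟩) (v ⟨m+1, by omega⟩) else 1 with hC
  set A : ℕ → ZMod 3 := fun m => if h : m ≤ n then g ⟨m, by omega⟩ else 0 with hA
  have hCne : ∀ i, C i ≠ 0 := by
    intro i
    rw [hC]
    dsimp only
    split
    · exact hadj i ‹_›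
    · exact one_ne_zero
  have hCsq : ∀ i, C i * C i = 1 := fun i => sq_one_of_ne_zero _ (hCne i)
  have hAe : ∀ j (h : j ≤ n), A j = g ⟨j, by omega⟩ := by
    intro j h; simp only [hA]; rw [dif_pos h]
  have hAz : ∀ j, n < j → A j = 0 := by
    intro j h; simp only [hA]; rw [dif_neg (by omega)]
  have hGval : ∀ k l : Fin (n+1), oForm n (v k) (v l) =
      if (k:ℕ) = (l:ℕ) then 2 else if (k:ℕ)+1 = (l:ℕ) then C (k:ℕ)
      else if (l:ℕ)+1 = (k:ℕ) then C (l:ℕ) else 0 := by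
    intro k l
    split_ifs with h1 h2 h3
    · rw [show k = l from Fin.ext h1]; exact hv2 l
    · rw [hC]; dsimp only
      rw [dif_pos (show (k:ℕ) + 1 ≤ n by have := l.isLt; omega)]
      have e1 : (⟨(k:ℕ), by omega⟩ : Fin (n+1)) = k := Fin.ext rfl
      have e2 : (⟨(k:ℕ)+1, by have := l.isLt; omega⟩ : Fin (n+1)) = l := Fin.ext h2
      rw [e1, e2]
    · rw [hC]; dsimp only
      rw [dif_pos (show (l:ℕ) + 1 ≤ n by have := k.isLt; omega), oForm_comm]
      have e1 : (⟨(l:ℕ), by omega⟩ : Fin (n+1)) = l := Fin.ext rfl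
      have e2 : (⟨(l:ℕ)+1, by have := k.isLt; omega⟩ : Fin (n+1)) = k := Fin.ext h3
      rw [e1, e2]
    · rcases Nat.lt_or_ge (k:ℕ) (l:ℕ) with h | h
      · exact horth k l (by omega)
      · exact horth' k l (by omega)
  -- row equations
  have hrow : ∀ (m : ℕ), m ≤ n →
      (if m = 0 then 0 else C (m-1) * A (m-1)) + 2 * A m + C m * A (m+1) = 0 := by
    intro m hm
    have h0 : oForm n (∑ k, g k • v k) (v ⟨m, by omega⟩) = 0 := by rw [hg0, oForm_zero_left]
    rw [oForm_sum_left] at h0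
    have hterm : ∀ k : Fin (n+1), oForm n (g k • v k) (v ⟨m, by omega⟩) =
        (if (k:ℕ) = m then 2 * g k else 0) + (if (k:ℕ)+1 = m then C (k:ℕ) * g k else 0)
        + (if (k:ℕ) = m+1 then C m * g k else 0) := by
      intro k
      rw [oForm_smul_left, hGval]
      simp only [Fin.val_mk]
      split_ifs <;> first | omega | ring
    rw [Finset.sum_congr rfl (fun k _ => hterm k), Finset.sum_add_distrib,
      Finset.sum_add_distrib, sum_ind_nat m, sum_ind_nat (m+1)] at h0
    rw [dif_pos hm] at h0
    have hmid : (∑ k : Fin (n+1), if (k:ℕ)+1 = m then C (k:ℕ) * g k else 0)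
        = if m = 0 then 0 else C (m-1) * A (m-1) := by
      rcases m with _ | m'
      · simp
      · rw [if_neg (by omega)]
        have hco : ∀ k : Fin (n+1), (if (k:ℕ)+1 = m'+1 then C (k:ℕ) * g k else 0)
            = (if (k:ℕ) = m' then C (k:ℕ) * g k else 0) := by
          intro k; split_ifs <;> first | rfl | omega
        rw [Finset.sum_congr rfl (fun k _ => hco k)]
        rw [sum_ind_nat m' (fun k => C (k:ℕ) * g k), dif_pos (by omega : m' ≤ n)]
        simp only [Nat.add_sub_cancel, Fin.val_mk]
        rw [hAe m' (by omega)]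
    rw [hmid] at h0
    have h3 : (if h : m+1 ≤ n then C m * g ⟨m+1, by omega⟩ else 0) = C m * A (m+1) := by
      split
      · rw [hAe (m+1) ‹_›]
      · rw [hAz (m+1) (by omega), mul_zero]
    rw [h3, ← hAe m hm] at h0
    linear_combination h0
  -- the b-sequence
  set Cp : ℕ → ZMod 3 := fun m => ∏ i ∈ Finset.range m, C i with hCp
  set bb : ℕ → ZMod 3 := fun m => A m * Cp m with hbb
  have hCpne : ∀ m, Cp m ≠ 0 := by
    intro m
    rw [hCp]
    exact Finset.prod_ne_zero_iff.mpr (fun i _ => hCne i)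
  have hCps : ∀ m, Cp (m+1) = Cp m * C m := by
    intro m; rw [hCp]; exact Finset.prod_range_succ C m
  have hb1 : bb 1 = bb 0 := by
    have h0 := hrow 0 (by omega)
    rw [if_pos rfl] at h0
    simp only [hbb]
    rw [show Cp 1 = Cp 0 * C 0 from hCps 0, show Cp 0 = 1 from rfl]
    linear_combination h0 - A 0 * h30
  have hbrec : ∀ m : ℕ, m + 1 ≤ n → bb (m+2) = bb (m+1) - bb m := by
    intro m hm
    have h0 := hrow (m+1) (by omega)
    rw [if_neg (by omega)] at h0
    simp only [Nat.add_sub_cancel] at h0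
    simp only [hbb]
    rw [hCps (m+1), hCps m]
    linear_combination (Cp m * C m) * h0 - (A m * Cp m) * (hCsq m)
      - (A (m+1) * Cp m * C m) * h30
  -- the periodic pattern
  have hkey : ∀ M : ℕ, 3*M + 2 ≤ n + 1 →
      bb (3*M) = (-1)^M * bb 0 ∧ bb (3*M+1) = (-1)^M * bb 0 ∧ bb (3*M+2) = 0 := by
    intro M
    induction M with
    | zero =>
      intro _
      refine ⟨by simp, by simpa using hb1, ?_⟩
      have := hbrec 0 (by omega)
      rw [this, hb1, sub_self]
    | succ M ih =>
      intro hM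
      obtain ⟨h0', h1', h2'⟩ := ih (by omega)
      have e3 : bb (3*M+3) = bb (3*M+2) - bb (3*M+1) := hbrec (3*M+1) (by omega)
      have e4 : bb (3*M+4) = bb (3*M+3) - bb (3*M+2) := hbrec (3*M+2) (by omega)
      have e5 : bb (3*M+5) = bb (3*M+4) - bb (3*M+3) := hbrec (3*M+3) (by omega)
      refine ⟨?_, ?_, ?_⟩
      · rw [show 3*(M+1) = 3*M+3 by ring, e3, h2', h1', pow_succ]
        ring
      · rw [show 3*(M+1)+1 = 3*M+4 by ring, e4, e3, h2', h1', pow_succ]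
        ring
      · rw [show 3*(M+1)+2 = 3*M+5 by ring, e5, e4, e3, h2', h1']
        ring
  -- conclude bb 0 = 0
  have hb0 : bb 0 = 0 := by
    obtain ⟨M, hMn⟩ : ∃ M, n = 3*M + 2 := ⟨n/3, by omega⟩
    obtain ⟨h0', h1', h2'⟩ := hkey M (by omega)
    have hlast : bb (3*M+3) = bb (3*M+2) - bb (3*M+1) := hbrec (3*M+1) (by omega)
    have hz : bb (3*M+3) = 0 := by
      simp only [hbb]
      rw [hAz (3*M+3) (by omega), zero_mul]
    rw [hz, h2', h1', zero_sub] at hlast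
    have : (-1:ZMod 3)^M * bb 0 = 0 := by linear_combination hlast
    rcases mul_eq_zero.mp this with h | h
    · exact absurd h (pow_ne_zero M (by decide))
    · exact h
  -- all bb vanish
  have hball : ∀ m : ℕ, m ≤ n → bb m = 0 ∧ bb (m+1) = 0 := by
    intro m
    induction m with
    | zero => intro _; exact ⟨hb0, by rw [hb1]; exact hb0⟩
    | succ m ih =>
      intro hm
      obtain ⟨hm0, hm1⟩ := ih (by omega)
      refine ⟨hm1, ?_⟩
      rw [hbrec m (by omega), hm1, hm0, sub_self]
  -- contradiction
  have hA0 : A (i0 : ℕ) = 0 := by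
    have := (hball (i0 : ℕ) (by have := i0.isLt; omega)).1
    simp only [hbb] at this
    rcases mul_eq_zero.mp this with h | h
    · exact h
    · exact absurd h (hCpne _)
  rw [hAe (i0:ℕ) (by have := i0.isLt; omega)] at hA0
  apply hgi
  have hfi : (⟨(i0:ℕ), by have := i0.isLt; omega⟩ : Fin (n+1)) = i0 := Fin.ext rfl
  rw [← hfi]
  exact hA0

end partB


/-- φ(O_n^{-,+}(3)) = n + 1 when n ≡ 2 (mod 3): S_{n+1} embeds with transpositions going to reflections t_v with B(v,v) = 2, while S_{n+2} does not. -/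
theorem phi_O_minus_plus_3_mod_two (n : ℕ) (hn : 5 ≤ n) (hmod : n % 3 = 2) :
    (∃ ψ : Equiv.Perm (Fin (n + 1)) →* ((Fin n → ZMod 3) ≃ₗ[ZMod 3] (Fin n → ZMod 3)),
      Function.Injective ψ ∧
      ∀ τ : Equiv.Perm (Fin (n + 1)), τ.IsSwap →
        ∃ v : Fin n → ZMod 3, oForm n v v = 2 ∧
          ∀ w, (ψ τ) w = w - oForm n w v • v) ∧
    ¬ (∃ ψ : Equiv.Perm (Fin (n + 2)) →* ((Fin n → ZMod 3) ≃ₗ[ZMod 3] (Fin n → ZMod 3)),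
      Function.Injective ψ ∧
      ∀ τ : Equiv.Perm (Fin (n + 2)), τ.IsSwap →
        ∃ v : Fin n → ZMod 3, oForm n v v = 2 ∧
          ∀ w, (ψ τ) w = w - oForm n w v • v) := by
  exact ⟨partA n hn hmod, partB n hn hmod⟩
end

section
/- Let n ≥ 6 be even with n ≡ 6 (mod 8), and let V = (Fin n → ZMod 2) with the minus-type quadratic form Q(x) = Σ_{i=1}^{n/2−1} x_{2i−1} x_{2i} + x_{n−1}² + x_{n−1} x_n + x_n² and its polar bilinear form B(x,y) = Q(x+y) + Q(x) + Q(y). Then: (a) there exists an injective group homomorphism ψ from the symmetric group S_n to the group of linear automorphisms of V such that for every transposition τ ∈ S_n, ψ(τ) is an orthogonal transvection t_v for some v ∈ V with Q(v) = 1; and (b) there is no injective group homomorphism from S_{n+1} to the linear automorphisms of V sending every transposition to such a transvection. (Equivalently, φ(O_n^{−}(2)) = n when n ≡ 6 (mod 8).) -/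
/-- The minus-type quadratic form on `(ZMod 2)^n` (`n` even, `n ≥ 2`):
`Q x = ∑_{i < n/2 - 1} x (2i) * x (2i+1) + x (n-2)² + x (n-2) * x (n-1) + x (n-1)²`
(0-indexed). -/
def Qform (n : ℕ) (hn : 2 ≤ n) (x : Fin n → ZMod 2) : ZMod 2 :=
  (∑ i : Fin (n / 2 - 1),
    x ⟨2 * i.1, by have := i.2; omega⟩ * x ⟨2 * i.1 + 1, by have := i.2; omega⟩) +
    x ⟨n - 2, by omega⟩ ^ 2 + x ⟨n - 2, by omega⟩ * x ⟨n - 1, by omega⟩ +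
    x ⟨n - 1, by omega⟩ ^ 2

/-- The polar bilinear form `B x y = Q (x + y) + Q x + Q y` of a quadratic form `Q`. -/
def polarForm {n : ℕ} (Q : (Fin n → ZMod 2) → ZMod 2) (x y : Fin n → ZMod 2) : ZMod 2 :=
  Q (x + y) + Q x + Q y

namespace S14

def Bform (n : ℕ) (hn : 2 ≤ n) (x y : Fin n → ZMod 2) : ZMod 2 :=
  (∑ i : Fin (n / 2 - 1),
    (x ⟨2 * i.1, by have := i.2; omega⟩ * y ⟨2 * i.1 + 1, by have := i.2; omega⟩ +
     x ⟨2 * i.1 + 1, by have := i.2; omega⟩ * y ⟨2 * i.1, by have := i.2; omega⟩)) +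
    (x ⟨n - 2, by omega⟩ * y ⟨n - 1, by omega⟩ + x ⟨n - 1, by omega⟩ * y ⟨n - 2, by omega⟩)

lemma Bform_add_left (n : ℕ) (hn : 2 ≤ n) (x x' y : Fin n → ZMod 2) :
    Bform n hn (x + x') y = Bform n hn x y + Bform n hn x' y := by
  have key : ∀ a b c d e f : ZMod 2, (a+b)*c + (d+e)*f = (a*c + d*f) + (b*c + e*f) := by
    intros; ring
  simp only [Bform, Pi.add_apply]
  rw [Finset.sum_congr rfl (fun i _ => key _ _ _ _ _ _), Finset.sum_add_distrib,
    key _ _ _ _ _ _]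
  abel

lemma Bform_smul_left (n : ℕ) (hn : 2 ≤ n) (c : ZMod 2) (x y : Fin n → ZMod 2) :
    Bform n hn (c • x) y = c * Bform n hn x y := by
  have key : ∀ c a b d e : ZMod 2, (c*a)*b + (c*d)*e = c*(a*b + d*e) := by intros; ring
  simp only [Bform, Pi.smul_apply, smul_eq_mul]
  rw [Finset.sum_congr rfl (fun i _ => key _ _ _ _ _), ← Finset.mul_sum,
    key _ _ _ _ _, ← mul_add]

lemma Bform_symm (n : ℕ) (hn : 2 ≤ n) (x y : Fin n → ZMod 2) :
    Bform n hn x y = Bform n hn y x := by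
  have key : ∀ a b c d : ZMod 2, a*b + c*d = d*c + b*a := by intros; ring
  simp only [Bform]
  rw [Finset.sum_congr rfl (fun i _ => key _ _ _ _), key _ _ _ _]

lemma Bform_add_right (n : ℕ) (hn : 2 ≤ n) (x y y' : Fin n → ZMod 2) :
    Bform n hn x (y + y') = Bform n hn x y + Bform n hn x y' := by
  rw [Bform_symm, Bform_add_left, Bform_symm n hn y x, Bform_symm n hn y' x]

lemma Bform_smul_right (n : ℕ) (hn : 2 ≤ n) (c : ZMod 2) (x y : Fin n → ZMod 2) :
    Bform n hn x (c • y) = c * Bform n hn x y := by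
  rw [Bform_symm, Bform_smul_left, Bform_symm]

lemma Bform_self (n : ℕ) (hn : 2 ≤ n) (x : Fin n → ZMod 2) :
    Bform n hn x x = 0 := by
  have key : ∀ a b : ZMod 2, a*b + b*a = 0 := by decide
  simp only [Bform]
  rw [Finset.sum_congr rfl (fun i _ => key _ _), Finset.sum_const_zero, key _ _, add_zero]

/-- The polar form as a bilinear map. -/
def Bmap (n : ℕ) (hn : 2 ≤ n) :
    (Fin n → ZMod 2) →ₗ[ZMod 2] (Fin n → ZMod 2) →ₗ[ZMod 2] ZMod 2 :=
  LinearMap.mk₂ (ZMod 2) (Bform n hn) (Bform_add_left n hn) (Bform_smul_left n hn)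
    (Bform_add_right n hn) (Bform_smul_right n hn)

lemma Bmap_apply (n : ℕ) (hn : 2 ≤ n) (x y : Fin n → ZMod 2) :
    Bmap n hn x y = Bform n hn x y := rfl

lemma Qform_zero (n : ℕ) (hn : 2 ≤ n) : Qform n hn 0 = 0 := by
  simp [Qform]


lemma polar_eq (n : ℕ) (hn : 2 ≤ n) (x y : Fin n → ZMod 2) :
    polarForm (Qform n hn) x y = Bform n hn x y := by
  have key : ∀ a b c d : ZMod 2, (a+c)*(b+d) = (a*b + c*d) + (a*d + b*c) := by decide
  simp only [polarForm, Qform, Bform, Pi.add_apply]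
  rw [Finset.sum_congr rfl (fun i _ => key (x ⟨2*i.1, by have := i.2; omega⟩)
      (x ⟨2*i.1+1, by have := i.2; omega⟩) (y ⟨2*i.1, by have := i.2; omega⟩)
      (y ⟨2*i.1+1, by have := i.2; omega⟩)), Finset.sum_add_distrib,
      Finset.sum_add_distrib]
  have key2 : ∀ a b c d : ZMod 2,
      ((a+c)^2 + (a+c)*(b+d) + (b+d)^2) + ((a^2+a*b+b^2) + (c^2+c*d+d^2)) = a*d + b*c := by
    decide
  have h2 : (2 : ZMod 2) = 0 := by decide
  linear_combination key2 (x ⟨n-2, by omega⟩) (x ⟨n-1, by omega⟩) (y ⟨n-2, by omega⟩)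
      (y ⟨n-1, by omega⟩) +
    ((∑ i : Fin (n / 2 - 1),
        x ⟨2 * i.1, by have := i.2; omega⟩ * x ⟨2 * i.1 + 1, by have := i.2; omega⟩) +
     (∑ i : Fin (n / 2 - 1),
        y ⟨2 * i.1, by have := i.2; omega⟩ * y ⟨2 * i.1 + 1, by have := i.2; omega⟩)) * h2

lemma Qform_add (n : ℕ) (hn : 2 ≤ n) (x y : Fin n → ZMod 2) :
    Qform n hn (x + y) = Qform n hn x + Qform n hn y + Bform n hn x y := by
  have h := polar_eq n hn x y
  have h2 : (2 : ZMod 2) = 0 := by decide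
  simp only [polarForm] at h
  linear_combination h - (Qform n hn x + Qform n hn y) * h2

lemma Qform_smul (n : ℕ) (hn : 2 ≤ n) (c : ZMod 2) (x : Fin n → ZMod 2) :
    Qform n hn (c • x) = c * Qform n hn x := by
  rcases (show ∀ a : ZMod 2, a = 0 ∨ a = 1 by decide) c with rfl | rfl
  · simp [Qform_zero]
  · simp

/-- value of `C(c,2)` mod 2 as a function of `c % 4` -/
def P2 (c : ℕ) : ZMod 2 := if c % 4 = 2 ∨ c % 4 = 3 then 1 else 0

lemma natCast_zmod2 (c : ℕ) : (c : ZMod 2) = if c % 2 = 0 then 0 else 1 := by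
  rcases (by omega : c % 2 = 0 ∨ c % 2 = 1) with h | h <;>
    rw [← ZMod.natCast_mod c 2, h] <;> simp

lemma P2_step (c : ℕ) : P2 (c + 1) = P2 c + (c : ZMod 2) := by
  rw [natCast_zmod2]
  simp only [P2]
  rcases (by omega : c % 4 = 0 ∨ c % 4 = 1 ∨ c % 4 = 2 ∨ c % 4 = 3) with h | h | h | h
  · rw [show (c+1) % 4 = 1 by omega, show c % 2 = 0 by omega, h]; norm_num
  · rw [show (c+1) % 4 = 2 by omega, show c % 2 = 1 by omega, h]; norm_num
  · rw [show (c+1) % 4 = 3 by omega, show c % 2 = 0 by omega, h]; norm_num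
  · rw [show (c+1) % 4 = 0 by omega, show c % 2 = 1 by omega, h]; decide

/-- Expansion of `Q` on a sum of vectors with constant Gram data. -/
lemma Qform_sum_gram (n : ℕ) (hn : 2 ≤ n) (u : Fin n → (Fin n → ZMod 2)) (qv : ZMod 2)
    (hq : ∀ i, Qform n hn (u i) = qv)
    (hb : ∀ i j, i ≠ j → Bform n hn (u i) (u j) = 1) (s : Finset (Fin n)) :
    Qform n hn (∑ i ∈ s, u i) = qv * (s.card : ZMod 2) + P2 s.card := by
  induction s using Finset.cons_induction with
  | empty => simp [Qform_zero, P2]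
  | cons a s ha ih =>
    have hsum : ∑ i ∈ s, Bform n hn (u a) (u i) = (s.card : ZMod 2) := by
      rw [Finset.sum_congr rfl (fun i hi => hb a i (by rintro rfl; exact ha hi)),
        Finset.sum_const]
      simp
    rw [Finset.sum_cons, Qform_add, ih, hq,
      show Bform n hn (u a) (∑ i ∈ s, u i) = (Bmap n hn (u a)) (∑ i ∈ s, u i) from rfl,
      map_sum]
    simp only [Bmap_apply]
    rw [hsum, Finset.card_cons, P2_step]
    push_cast
    ring


section gram
variable (n : ℕ) (hn : 2 ≤ n) (u : Fin n → (Fin n → ZMod 2))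

lemma pair_val (hb : ∀ i j, i ≠ j → Bform n hn (u i) (u j) = 1)
    (s : Finset (Fin n)) (j : Fin n) :
    Bform n hn (∑ i ∈ s, u i) (u j) =
      (s.card : ZMod 2) + (if j ∈ s then 1 else 0) := by
  rw [show Bform n hn (∑ i ∈ s, u i) (u j)
      = Bmap n hn (∑ i ∈ s, u i) (u j) from rfl, map_sum, LinearMap.sum_apply]
  simp only [Bmap_apply]
  by_cases hj : j ∈ s
  · have hc : 1 ≤ s.card := Finset.card_pos.mpr ⟨j, hj⟩
    rw [← Finset.sum_erase_add _ _ hj,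
      Finset.sum_congr rfl (fun i hi => hb i j (Finset.ne_of_mem_erase hi)),
      Finset.sum_const, Bform_self, Finset.card_erase_of_mem hj, if_pos hj]
    have h2 : (2 : ZMod 2) = 0 := by decide
    rw [nsmul_eq_mul, mul_one, Nat.cast_sub hc]
    push_cast
    linear_combination -h2
  · rw [Finset.sum_congr rfl (fun i hi => hb i j (by rintro rfl; exact hj hi)),
      Finset.sum_const, if_neg hj, nsmul_eq_mul, mul_one, add_zero]

lemma sum_inj (hev : n % 2 = 0) (hb : ∀ i j, i ≠ j → Bform n hn (u i) (u j) = 1)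
    (s t : Finset (Fin n)) (h : ∑ i ∈ s, u i = ∑ i ∈ t, u i) : s = t := by
  have hp : ∀ j, (s.card : ZMod 2) + (if j ∈ s then 1 else 0)
      = (t.card : ZMod 2) + (if j ∈ t then 1 else 0) := fun j => by
    rw [← pair_val n hn u hb, ← pair_val n hn u hb, h]
  by_cases hc : (s.card : ZMod 2) = (t.card : ZMod 2)
  · ext j
    have hpj := hp j
    rw [hc] at hpj
    have := add_left_cancel hpj
    by_cases hjs : j ∈ s <;> by_cases hjt : j ∈ t <;>
      simp only [hjs, hjt, if_pos, if_neg, if_true, if_false] at this ⊢ <;>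
      first
        | (exact iff_of_true hjs hjt)
        | (exact absurd this (by decide))
        | (exact iff_of_false hjs hjt)
  · exfalso
    have hall : ∀ j, j ∈ t ↔ j ∉ s := by
      intro j
      have hpj := hp j
      by_cases hjs : j ∈ s <;> by_cases hjt : j ∈ t <;>
        simp only [hjs, hjt, if_true, if_false, if_pos, if_neg, add_zero] at hpj ⊢ <;>
        first
          | trivial
          | (exact absurd (by linear_combination hpj) hc)
          | (exact absurd (by linear_combination -hpj) hc)
    have ht : t = sᶜ := Finset.ext fun j => by simp [hall j]
    have hcard : t.card = n - s.card := by
      rw [ht, Finset.card_compl, Fintype.card_fin]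
    have hle : s.card ≤ n := by
      simpa using Finset.card_le_card (Finset.subset_univ s)
    apply hc
    rw [natCast_zmod2, natCast_zmod2, hcard]
    rcases (by omega : s.card % 2 = 0 ∧ (n - s.card) % 2 = 0
        ∨ s.card % 2 = 1 ∧ (n - s.card) % 2 = 1) with ⟨h1, h2⟩ | ⟨h1, h2⟩ <;>
      rw [h1, h2]

lemma count_transfer (hev : n % 2 = 0) (qv : ZMod 2)
    (hq : ∀ i, Qform n hn (u i) = qv)
    (hb : ∀ i j, i ≠ j → Bform n hn (u i) (u j) = 1) :
    (Finset.univ.filter (fun x : Fin n → ZMod 2 => Qform n hn x = 0)).card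
      = (Finset.univ.filter
          (fun s : Finset (Fin n) => qv * (s.card : ZMod 2) + P2 s.card = 0)).card := by
  have hbij : Function.Bijective (fun s : Finset (Fin n) => ∑ i ∈ s, u i) := by
    rw [Fintype.bijective_iff_injective_and_card]
    constructor
    · intro s t h
      exact sum_inj n hn u hev hb s t h
    · simp [Fintype.card_finset, Fintype.card_fun]
  symm
  apply Finset.card_bij (fun s _ => ∑ i ∈ s, u i)
  · intro s hs
    simp only [Finset.mem_filter, Finset.mem_univ, true_and] at hs ⊢
    rw [Qform_sum_gram n hn u qv hq hb s, hs]
  · intro s hs t ht h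
    exact sum_inj n hn u hev hb s t h
  · intro x hx
    simp only [Finset.mem_filter, Finset.mem_univ, true_and] at hx
    obtain ⟨s, rfl⟩ := hbij.surjective x
    refine ⟨s, ?_, rfl⟩
    simp only [Finset.mem_filter, Finset.mem_univ, true_and]
    rw [← Qform_sum_gram n hn u qv hq hb s, hx]

end gram



/-- auxiliary: the `i`-th hyperbolic product of `x`, as a total function of `i : ℕ`. -/
def pf (n : ℕ) (x : Fin n → ZMod 2) (i : ℕ) : ZMod 2 :=
  if h : 2*i+1 < n then x ⟨2*i, by omega⟩ * x ⟨2*i+1, h⟩ else 0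

lemma pf_pos (n : ℕ) (x : Fin n → ZMod 2) (i : ℕ) (h : 2*i+1 < n) :
    pf n x i = x ⟨2*i, by omega⟩ * x ⟨2*i+1, h⟩ := dif_pos h

lemma Qform_split2 (n : ℕ) (hn : 2 ≤ n) (hev : n % 2 = 0) (x : Fin (n+2) → ZMod 2) :
    Qform (n+2) (by omega) x
      = x ⟨0, by omega⟩ * x ⟨1, by omega⟩
        + Qform n hn (fun i => x ⟨i.1+2, by omega⟩) := by
  have hm : (n+2)/2 - 1 = (n/2 - 1) + 1 := by omega
  simp only [Qform]
  beta_reduce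
  have e1 : (∑ i : Fin ((n+2)/2 - 1),
      x ⟨2*i.1, by have := i.2; omega⟩ * x ⟨2*i.1+1, by have := i.2; omega⟩)
      = ∑ i : Fin ((n+2)/2 - 1), pf (n+2) x i.1 :=
    Finset.sum_congr rfl fun i _ => (pf_pos (n+2) x i.1 (by have := i.2; omega)).symm
  have e2 : (∑ i : Fin (n/2 - 1),
      x ⟨2*i.1+2, by have := i.2; omega⟩ * x ⟨2*i.1+1+2, by have := i.2; omega⟩)
      = ∑ i : Fin (n/2 - 1), pf (n+2) x (i.1+1) :=
    Finset.sum_congr rfl fun i _ => (pf_pos (n+2) x (i.1+1) (by have := i.2; omega)).symm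
  rw [e1, e2, Fin.sum_univ_eq_sum_range (pf (n+2) x),
    Fin.sum_univ_eq_sum_range (fun i => pf (n+2) x (i+1)),
    hm, Finset.sum_range_succ' (pf (n+2) x), pf_pos (n+2) x 0 (by omega)]
  have i3 : (⟨n+2-2, by omega⟩ : Fin (n+2)) = ⟨(n-2)+2, by omega⟩ := by
    apply Fin.ext
    simp only [Fin.val_mk]
    omega
  have i4 : (⟨n+2-1, by omega⟩ : Fin (n+2)) = ⟨(n-1)+2, by omega⟩ := by
    apply Fin.ext
    simp only [Fin.val_mk]
    omega
  rw [i3, i4]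
  ring


lemma fin_cons_mk_zero {n : ℕ} {M : Type*} (a : M) (g : Fin (n+1) → M) (h : 0 < n+2) :
    (Fin.cons a g : Fin (n+2) → M) ⟨0, h⟩ = a := rfl

lemma fin_cons_mk_succ {n : ℕ} {M : Type*} (a : M) (g : Fin (n+1) → M) (k : ℕ)
    (h : k+1 < n+2) :
    (Fin.cons a g : Fin (n+2) → M) ⟨k+1, h⟩ = g ⟨k, by omega⟩ := rfl

lemma Qform_cons (n : ℕ) (hn : 2 ≤ n) (hev : n % 2 = 0) (a b : ZMod 2)
    (y : Fin n → ZMod 2) :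
    Qform (n+2) (by omega) (Fin.cons a (Fin.cons b y)) = a * b + Qform n hn y := by
  rw [Qform_split2 n hn hev]
  have h0 : (Fin.cons a (Fin.cons b y) : Fin (n+2) → ZMod 2) ⟨0, by omega⟩ = a := rfl
  have h1 : (Fin.cons a (Fin.cons b y) : Fin (n+2) → ZMod 2) ⟨1, by omega⟩ = b := rfl
  have h2 : (fun i : Fin n => (Fin.cons a (Fin.cons b y) : Fin (n+2) → ZMod 2)
      ⟨i.1+2, by omega⟩) = y := by
    funext i
    show (Fin.cons b y : Fin (n+1) → ZMod 2) ⟨i.1+1, by omega⟩ = y i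
    show y ⟨i.1, i.2⟩ = y i
    rw [Fin.eta]
  rw [h0, h1, h2]


/-- gluing two coordinates onto a vector -/
def consEquiv (n : ℕ) : (ZMod 2 × ZMod 2 × (Fin n → ZMod 2)) ≃ (Fin (n+2) → ZMod 2) where
  toFun p := Fin.cons p.1 (Fin.cons p.2.1 p.2.2)
  invFun x := (x ⟨0, by omega⟩, x ⟨1, by omega⟩, fun i => x ⟨i.1+2, by omega⟩)
  left_inv p := by
    obtain ⟨a, b, y⟩ := p
    refine Prod.ext rfl (Prod.ext rfl ?_)
    funext i
    show y ⟨i.1, i.2⟩ = y i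
    rw [Fin.eta]
  right_inv x := by
    funext j
    rcases j with ⟨j, hj⟩
    match j with
    | 0 => rfl
    | 1 => rfl
    | (k+2) => rfl

lemma count1 (m : ℕ) :
    (Finset.univ.filter
      fun x : Fin (2*m+2) → ZMod 2 => Qform (2*m+2) (by omega) x = 0).card + 2^m
    = 2^(2*m+1) := by
  induction m with
  | zero => decide
  | succ m ih =>
    show (Finset.univ.filter
      fun x : Fin ((2*m+2)+2) → ZMod 2 => Qform ((2*m+2)+2) (by omega) x = 0).card + 2^(m+1)
      = 2^(2*(m+1)+1)
    have hstep : (Finset.univ.filter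
        fun x : Fin ((2*m+2)+2) → ZMod 2 => Qform ((2*m+2)+2) (by omega) x = 0).card
        = 2 * (Finset.univ.filter
            fun y : Fin (2*m+2) → ZMod 2 => Qform (2*m+2) (by omega) y = 0).card
          + 2^(2*m+2) := by
      rw [Finset.card_filter]
      rw [← Equiv.sum_comp (consEquiv (2*m+2))
        (fun x => if Qform ((2*m+2)+2) (by omega) x = 0 then (1:ℕ) else 0)]
      have hpt : ∀ p : ZMod 2 × ZMod 2 × (Fin (2*m+2) → ZMod 2),
          (if Qform ((2*m+2)+2) (by omega) (consEquiv (2*m+2) p) = 0 then (1:ℕ) else 0)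
          = if p.1 * p.2.1 + Qform (2*m+2) (by omega) p.2.2 = 0 then (1:ℕ) else 0 := by
        rintro ⟨a, b, y⟩
        have : Qform ((2*m+2)+2) (by omega) (consEquiv (2*m+2) (a, b, y))
            = a * b + Qform (2*m+2) (by omega) y :=
          Qform_cons (2*m+2) (by omega) (by omega) a b y
        rw [this]
      rw [Fintype.sum_congr _ _ hpt, Fintype.sum_prod_type]
      have hswap : ∀ a : ZMod 2,
          (∑ q : ZMod 2 × (Fin (2*m+2) → ZMod 2),
            if a * q.1 + Qform (2*m+2) (by omega) q.2 = 0 then (1:ℕ) else 0)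
          = ∑ y : Fin (2*m+2) → ZMod 2, ∑ b : ZMod 2,
              if a * b + Qform (2*m+2) (by omega) y = 0 then (1:ℕ) else 0 := by
        intro a
        rw [Fintype.sum_prod_type]
        exact Finset.sum_comm
      rw [Fintype.sum_congr _ _ hswap, Finset.sum_comm]
      have hinner : ∀ y : Fin (2*m+2) → ZMod 2,
          (∑ a : ZMod 2, ∑ b : ZMod 2,
            if a * b + Qform (2*m+2) (by omega) y = 0 then (1:ℕ) else 0)
          = 1 + 2 * (if Qform (2*m+2) (by omega) y = 0 then (1:ℕ) else 0) := by
        intro y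
        have : ∀ c : ZMod 2, (∑ a : ZMod 2, ∑ b : ZMod 2,
            if a * b + c = 0 then (1:ℕ) else 0) = 1 + 2 * (if c = 0 then (1:ℕ) else 0) := by
          decide
        exact this _
      rw [Finset.sum_congr rfl (fun y _ => hinner y), Finset.sum_add_distrib,
        Finset.sum_const, ← Finset.mul_sum, ← Finset.card_filter, smul_eq_mul, mul_one,
        Finset.card_univ]
      have hcard : Fintype.card (Fin (2*m+2) → ZMod 2) = 2^(2*m+2) := by
        simp [Fintype.card_fun]
      rw [hcard]
      omega
    rw [hstep]
    have h1 : (2:ℕ)^(2*(m+1)+1) = 4 * 2^(2*m+1) := by ring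
    have h2 : (2:ℕ)^(m+1) = 2 * 2^m := by ring
    have h3 : (2:ℕ)^(2*m+2) = 2 * 2^(2*m+1) := by ring
    omega


lemma sum_range_add4 {M : Type*} [AddCommMonoid M] (f : ℕ → M) (k : ℕ) :
    ∑ i ∈ Finset.range (k+4), f i
      = (∑ i ∈ Finset.range k, f (i+4)) + (f 0 + f 1 + f 2 + f 3) := by
  rw [Finset.sum_range_succ' f (k+3), Finset.sum_range_succ' _ (k+2),
    Finset.sum_range_succ' _ (k+1), Finset.sum_range_succ' _ k]
  rw [Finset.sum_congr rfl (fun i _ => show f (i+1+1+1+1) = f (i+4) by norm_num)]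
  have e0 : (0:ℕ)+1+1+1 = 3 := by norm_num
  have e1 : (0:ℕ)+1+1 = 2 := by norm_num
  have e2 : (0:ℕ)+1 = 1 := by norm_num
  rw [e0, e1, e2]
  abel

lemma Qform_split8 (n : ℕ) (hn : 2 ≤ n) (hev : n % 2 = 0) (x : Fin (n+8) → ZMod 2) :
    Qform (n+8) (by omega) x
      = (x ⟨0, by omega⟩ * x ⟨1, by omega⟩ + x ⟨2, by omega⟩ * x ⟨3, by omega⟩
          + x ⟨4, by omega⟩ * x ⟨5, by omega⟩ + x ⟨6, by omega⟩ * x ⟨7, by omega⟩)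
        + Qform n hn (fun i => x ⟨i.1+8, by omega⟩) := by
  have hm : (n+8)/2 - 1 = (n/2 - 1) + 4 := by omega
  simp only [Qform]
  have e1 : (∑ i : Fin ((n+8)/2 - 1),
      x ⟨2*i.1, by have := i.2; omega⟩ * x ⟨2*i.1+1, by have := i.2; omega⟩)
      = ∑ i : Fin ((n+8)/2 - 1), pf (n+8) x i.1 :=
    Finset.sum_congr rfl fun i _ => (pf_pos (n+8) x i.1 (by have := i.2; omega)).symm
  have e2 : (∑ i : Fin (n/2 - 1),
      x ⟨2*i.1+8, by have := i.2; omega⟩ * x ⟨2*i.1+1+8, by have := i.2; omega⟩)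
      = ∑ i ∈ Finset.range (n/2 - 1), pf (n+8) x (i+4) := by
    rw [← Fin.sum_univ_eq_sum_range (fun i => pf (n+8) x (i+4))]
    exact Finset.sum_congr rfl fun i _ => (pf_pos (n+8) x (i.1+4) (by have := i.2; omega)).symm
  rw [e1, e2, Fin.sum_univ_eq_sum_range (pf (n+8) x), hm, sum_range_add4 (pf (n+8) x),
    pf_pos (n+8) x 0 (by omega), pf_pos (n+8) x 1 (by omega), pf_pos (n+8) x 2 (by omega),
    pf_pos (n+8) x 3 (by omega)]
  have i3 : (⟨n+8-2, by omega⟩ : Fin (n+8)) = ⟨(n-2)+8, by omega⟩ := by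
    apply Fin.ext
    simp only [Fin.val_mk]
    omega
  have i4 : (⟨n+8-1, by omega⟩ : Fin (n+8)) = ⟨(n-1)+8, by omega⟩ := by
    apply Fin.ext
    simp only [Fin.val_mk]
    omega
  rw [i3, i4]
  norm_num
  ring

/-- bilinear analogue of `pf` -/
def pfb (n : ℕ) (x y : Fin n → ZMod 2) (i : ℕ) : ZMod 2 :=
  if h : 2*i+1 < n then
    x ⟨2*i, by omega⟩ * y ⟨2*i+1, h⟩ + x ⟨2*i+1, h⟩ * y ⟨2*i, by omega⟩ else 0

lemma pfb_pos (n : ℕ) (x y : Fin n → ZMod 2) (i : ℕ) (h : 2*i+1 < n) :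
    pfb n x y i = x ⟨2*i, by omega⟩ * y ⟨2*i+1, h⟩ + x ⟨2*i+1, h⟩ * y ⟨2*i, by omega⟩ :=
  dif_pos h

lemma Bform_split8 (n : ℕ) (hn : 2 ≤ n) (hev : n % 2 = 0) (x y : Fin (n+8) → ZMod 2) :
    Bform (n+8) (by omega) x y
      = ((x ⟨0, by omega⟩ * y ⟨1, by omega⟩ + x ⟨1, by omega⟩ * y ⟨0, by omega⟩)
          + (x ⟨2, by omega⟩ * y ⟨3, by omega⟩ + x ⟨3, by omega⟩ * y ⟨2, by omega⟩)
          + (x ⟨4, by omega⟩ * y ⟨5, by omega⟩ + x ⟨5, by omega⟩ * y ⟨4, by omega⟩)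
          + (x ⟨6, by omega⟩ * y ⟨7, by omega⟩ + x ⟨7, by omega⟩ * y ⟨6, by omega⟩))
        + Bform n hn (fun i => x ⟨i.1+8, by omega⟩) (fun i => y ⟨i.1+8, by omega⟩) := by
  have hm : (n+8)/2 - 1 = (n/2 - 1) + 4 := by omega
  simp only [Bform]
  have e1 : (∑ i : Fin ((n+8)/2 - 1),
      (x ⟨2*i.1, by have := i.2; omega⟩ * y ⟨2*i.1+1, by have := i.2; omega⟩
        + x ⟨2*i.1+1, by have := i.2; omega⟩ * y ⟨2*i.1, by have := i.2; omega⟩))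
      = ∑ i : Fin ((n+8)/2 - 1), pfb (n+8) x y i.1 :=
    Finset.sum_congr rfl fun i _ => (pfb_pos (n+8) x y i.1 (by have := i.2; omega)).symm
  have e2 : (∑ i : Fin (n/2 - 1),
      (x ⟨2*i.1+8, by have := i.2; omega⟩ * y ⟨2*i.1+1+8, by have := i.2; omega⟩
        + x ⟨2*i.1+1+8, by have := i.2; omega⟩ * y ⟨2*i.1+8, by have := i.2; omega⟩))
      = ∑ i ∈ Finset.range (n/2 - 1), pfb (n+8) x y (i+4) := by
    rw [← Fin.sum_univ_eq_sum_range (fun i => pfb (n+8) x y (i+4))]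
    exact Finset.sum_congr rfl fun i _ =>
      (pfb_pos (n+8) x y (i.1+4) (by have := i.2; omega)).symm
  rw [e1, e2, Fin.sum_univ_eq_sum_range (pfb (n+8) x y), hm, sum_range_add4 (pfb (n+8) x y),
    pfb_pos (n+8) x y 0 (by omega), pfb_pos (n+8) x y 1 (by omega),
    pfb_pos (n+8) x y 2 (by omega), pfb_pos (n+8) x y 3 (by omega)]
  have i3 : (⟨n+8-2, by omega⟩ : Fin (n+8)) = ⟨(n-2)+8, by omega⟩ := by
    apply Fin.ext
    simp only [Fin.val_mk]
    omega
  have i4 : (⟨n+8-1, by omega⟩ : Fin (n+8)) = ⟨(n-1)+8, by omega⟩ := by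
    apply Fin.ext
    simp only [Fin.val_mk]
    omega
  rw [i3, i4]
  norm_num
  ring


/-- glue an 8-dim front onto an `N`-dim tail -/
def glue8 (N : ℕ) (a : Fin 8 → ZMod 2) (b : Fin N → ZMod 2) : Fin (N+8) → ZMod 2 :=
  fun j => if h : j.1 < 8 then a ⟨j.1, h⟩ else b ⟨j.1 - 8, by have := j.2; omega⟩

lemma glue8_lt (N : ℕ) (a : Fin 8 → ZMod 2) (b : Fin N → ZMod 2) (j : ℕ) (hj : j < 8)
    (h : j < N+8) : glue8 N a b ⟨j, h⟩ = a ⟨j, hj⟩ := dif_pos hj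

lemma glue8_ge (N : ℕ) (a : Fin 8 → ZMod 2) (b : Fin N → ZMod 2) (i : ℕ) (hi : i < N) :
    glue8 N a b ⟨i+8, by omega⟩ = b ⟨i, hi⟩ := by
  rw [glue8, dif_neg (show ¬ ((⟨i+8, by omega⟩ : Fin (N+8)).1 < 8) by
    simp only [Fin.val_mk]; omega)]
  congr 1

lemma glue8_tail (N : ℕ) (a : Fin 8 → ZMod 2) (b : Fin N → ZMod 2) :
    (fun i : Fin N => glue8 N a b ⟨i.1+8, by omega⟩) = b := by
  funext i
  rw [glue8_ge N a b i.1 i.2, Fin.eta]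

/-- quadratic form on the 8-dim front (4 hyperbolic pairs) -/
def QH8 (a : Fin 8 → ZMod 2) : ZMod 2 :=
  a ⟨0, by omega⟩ * a ⟨1, by omega⟩ + a ⟨2, by omega⟩ * a ⟨3, by omega⟩
    + a ⟨4, by omega⟩ * a ⟨5, by omega⟩ + a ⟨6, by omega⟩ * a ⟨7, by omega⟩

/-- polar form on the 8-dim front -/
def BH8 (a a' : Fin 8 → ZMod 2) : ZMod 2 :=
  (a ⟨0, by omega⟩ * a' ⟨1, by omega⟩ + a ⟨1, by omega⟩ * a' ⟨0, by omega⟩)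
    + (a ⟨2, by omega⟩ * a' ⟨3, by omega⟩ + a ⟨3, by omega⟩ * a' ⟨2, by omega⟩)
    + (a ⟨4, by omega⟩ * a' ⟨5, by omega⟩ + a ⟨5, by omega⟩ * a' ⟨4, by omega⟩)
    + (a ⟨6, by omega⟩ * a' ⟨7, by omega⟩ + a ⟨7, by omega⟩ * a' ⟨6, by omega⟩)

lemma Qform_glue (N : ℕ) (hN : 2 ≤ N) (hev : N % 2 = 0) (a : Fin 8 → ZMod 2)
    (b : Fin N → ZMod 2) :
    Qform (N+8) (by omega) (glue8 N a b) = QH8 a + Qform N hN b := by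
  rw [Qform_split8 N hN hev (glue8 N a b), glue8_tail N a b,
    glue8_lt N a b 0 (by omega) (by omega), glue8_lt N a b 1 (by omega) (by omega),
    glue8_lt N a b 2 (by omega) (by omega), glue8_lt N a b 3 (by omega) (by omega),
    glue8_lt N a b 4 (by omega) (by omega), glue8_lt N a b 5 (by omega) (by omega),
    glue8_lt N a b 6 (by omega) (by omega), glue8_lt N a b 7 (by omega) (by omega), QH8]

lemma Bform_glue (N : ℕ) (hN : 2 ≤ N) (hev : N % 2 = 0) (a a' : Fin 8 → ZMod 2)
    (b b' : Fin N → ZMod 2) :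
    Bform (N+8) (by omega) (glue8 N a b) (glue8 N a' b') = BH8 a a' + Bform N hN b b' := by
  rw [Bform_split8 N hN hev (glue8 N a b) (glue8 N a' b'), glue8_tail N a b,
    glue8_tail N a' b',
    glue8_lt N a b 0 (by omega) (by omega), glue8_lt N a b 1 (by omega) (by omega),
    glue8_lt N a b 2 (by omega) (by omega), glue8_lt N a b 3 (by omega) (by omega),
    glue8_lt N a b 4 (by omega) (by omega), glue8_lt N a b 5 (by omega) (by omega),
    glue8_lt N a b 6 (by omega) (by omega), glue8_lt N a b 7 (by omega) (by omega),
    glue8_lt N a' b' 0 (by omega) (by omega), glue8_lt N a' b' 1 (by omega) (by omega),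
    glue8_lt N a' b' 2 (by omega) (by omega), glue8_lt N a' b' 3 (by omega) (by omega),
    glue8_lt N a' b' 4 (by omega) (by omega), glue8_lt N a' b' 5 (by omega) (by omega),
    glue8_lt N a' b' 6 (by omega) (by omega), glue8_lt N a' b' 7 (by omega) (by omega),
    BH8]

lemma Bform_zero_left (n : ℕ) (hn : 2 ≤ n) (y : Fin n → ZMod 2) :
    Bform n hn 0 y = 0 := by
  rw [show Bform n hn 0 y = Bmap n hn 0 y from rfl, map_zero, LinearMap.zero_apply]

lemma Bform_zero_right (n : ℕ) (hn : 2 ≤ n) (x : Fin n → ZMod 2) :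
    Bform n hn x 0 = 0 := by
  rw [Bform_symm, Bform_zero_left]


/-- existence of a `q2`-Gram basis configuration -/
def Gad (N : ℕ) (hN : 2 ≤ N) : Prop :=
  ∃ u : Fin N → (Fin N → ZMod 2),
    (∀ i, Qform N hN (u i) = 0) ∧ ∀ i j, i ≠ j → Bform N hN (u i) (u j) = 1

def u6 : Fin 6 → Fin 6 → ZMod 2 :=
  ![![0,0,0,1,0,0], ![0,0,1,0,0,0], ![0,0,1,1,0,1],
    ![0,0,1,1,1,0], ![0,1,1,1,1,1], ![1,0,1,1,1,1]]

lemma gad_six : Gad 6 (by omega) := by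
  refine ⟨u6, ?_, ?_⟩ <;> decide

def p8 : Fin 8 → Fin 8 → ZMod 2 :=
  ![![0,0,0,0,0,0,0,1], ![0,0,0,0,0,0,1,0], ![0,0,0,0,1,1,1,1], ![0,0,1,1,0,1,1,1],
    ![0,1,1,1,1,0,1,1], ![1,0,1,1,1,0,1,1], ![1,1,0,0,1,0,1,1], ![1,1,0,1,0,1,1,1]]

def h8 : Fin 8 → ZMod 2 := ![1,1,1,0,0,1,1,1]

lemma p8_facts :
    (∀ k, QH8 (p8 k) = 0) ∧ (∀ k l, k ≠ l → BH8 (p8 k) (p8 l) = 1) ∧ QH8 h8 = 0 ∧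
      (∀ k, BH8 h8 (p8 k) = 1) ∧ (∀ k, BH8 (p8 k) h8 = 1) ∧ BH8 h8 h8 = 0 := by
  refine ⟨?_, ?_, ?_, ?_, ?_, ?_⟩ <;> decide

lemma gad_step (N : ℕ) (hN : 2 ≤ N) (hev : N % 2 = 0) (h : Gad N hN) :
    Gad (N+8) (by omega) := by
  obtain ⟨u, hq, hb⟩ := h
  obtain ⟨hp1, hp2, hp3, hp4, hp5, hp6⟩ := p8_facts
  refine ⟨fun i => if h : i.1 < 8 then glue8 N (p8 ⟨i.1, h⟩) 0
    else glue8 N h8 (u ⟨i.1 - 8, by have := i.2; omega⟩), ?_, ?_⟩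
  · intro i
    show Qform (N+8) (by omega) (if h : i.1 < 8 then glue8 N (p8 ⟨i.1, h⟩) 0
      else glue8 N h8 (u ⟨i.1 - 8, by have := i.2; omega⟩)) = 0
    by_cases h : i.1 < 8
    · rw [dif_pos h, Qform_glue N hN hev, hp1, Qform_zero, add_zero]
    · rw [dif_neg h, Qform_glue N hN hev, hp3, hq, add_zero]
  · intro i j hij
    show Bform (N+8) (by omega)
      (if h : i.1 < 8 then glue8 N (p8 ⟨i.1, h⟩) 0
        else glue8 N h8 (u ⟨i.1 - 8, by have := i.2; omega⟩))
      (if h : j.1 < 8 then glue8 N (p8 ⟨j.1, h⟩) 0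
        else glue8 N h8 (u ⟨j.1 - 8, by have := j.2; omega⟩)) = 1
    by_cases h1 : i.1 < 8 <;> by_cases h2 : j.1 < 8
    · rw [dif_pos h1, dif_pos h2, Bform_glue N hN hev,
        hp2 _ _ (by
          intro hkl
          apply hij
          apply Fin.ext
          have := congrArg Fin.val hkl
          simp only [Fin.val_mk] at this
          exact this),
        Bform_zero_left, add_zero]
    · rw [dif_pos h1, dif_neg h2, Bform_glue N hN hev, hp5, Bform_zero_left, add_zero]
    · rw [dif_neg h1, dif_pos h2, Bform_glue N hN hev, hp4, Bform_zero_right, add_zero]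
    · rw [dif_neg h1, dif_neg h2, Bform_glue N hN hev, hp6,
        hb _ _ (by
          intro hkl
          apply hij
          apply Fin.ext
          have := congrArg Fin.val hkl
          simp only [Fin.val_mk] at this
          omega), zero_add]

lemma gad_all (t : ℕ) : Gad (8*t+6) (by omega) := by
  induction t with
  | zero => exact gad_six
  | succ t ih =>
    have : Gad ((8*t+6)+8) (by omega) := gad_step (8*t+6) (by omega) (by omega) ih
    exact this

lemma gad_mod8 (n : ℕ) (h : n % 8 = 6) : Gad n (by omega) := by
  obtain ⟨t, rfl⟩ : ∃ t, n = 8*t+6 := ⟨(n-6)/8, by omega⟩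
  exact gad_all t


lemma add_self_zero {n : ℕ} (x : Fin n → ZMod 2) : x + x = 0 := by
  rw [← two_smul (ZMod 2) x, show (2 : ZMod 2) = 0 by decide, zero_smul]

lemma li_of_gram (n : ℕ) (hn : 2 ≤ n) (hev : n % 2 = 0)
    (u : Fin n → (Fin n → ZMod 2))
    (hb : ∀ i j, i ≠ j → Bform n hn (u i) (u j) = 1) :
    LinearIndependent (ZMod 2) u := by
  rw [Fintype.linearIndependent_iff]
  intro g hg j
  have hp : ∀ k, ∑ i, g i * Bform n hn (u i) (u k) = 0 := by
    intro k
    have h0 : Bmap n hn (∑ i, g i • u i) (u k) = 0 := by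
      rw [hg]
      simp
    rw [map_sum, LinearMap.sum_apply] at h0
    simpa [map_smul, LinearMap.smul_apply, smul_eq_mul, Bmap_apply] using h0
  have hS : ∀ k, g k = ∑ i, g i := by
    intro k
    have h1 := hp k
    rw [← Finset.sum_erase_add _ _ (Finset.mem_univ k), Bform_self, mul_zero, add_zero,
      Finset.sum_congr rfl (fun i hi => by
        rw [hb i k (Finset.ne_of_mem_erase hi), mul_one])] at h1
    have h2 : ∑ i, g i = g k + ∑ i ∈ Finset.univ.erase k, g i :=
      (Finset.add_sum_erase _ _ (Finset.mem_univ k)).symm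
    rw [h1, add_zero] at h2
    exact h2.symm
  have hz : ∑ i, g i = 0 := by
    have h3 : ∑ k : Fin n, g k = ∑ _k : Fin n, ∑ i, g i :=
      Finset.sum_congr rfl (fun k _ => hS k)
    rw [Finset.sum_const, Finset.card_univ, Fintype.card_fin, nsmul_eq_mul,
      natCast_zmod2, if_pos hev, zero_mul] at h3
    exact h3
  rw [hS j, hz]

lemma partA (n : ℕ) (hn : 6 ≤ n) (hmod : n % 8 = 6) :
    ∃ ψ : Equiv.Perm (Fin n) →* ((Fin n → ZMod 2) ≃ₗ[ZMod 2] (Fin n → ZMod 2)),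
      Function.Injective ψ ∧
      ∀ τ : Equiv.Perm (Fin n), τ.IsSwap →
        ∃ v : Fin n → ZMod 2, Qform n (by linarith) v = 1 ∧
          ∀ w, (ψ τ) w = w + polarForm (Qform n (by linarith)) w v • v := by
  have hn2 : 2 ≤ n := by omega
  have hev : n % 2 = 0 := by omega
  obtain ⟨u, hq, hb⟩ := gad_mod8 n hmod
  haveI : Nonempty (Fin n) := ⟨⟨0, by omega⟩⟩
  have hli : LinearIndependent (ZMod 2) u := li_of_gram n (by omega) hev u hb
  have hcard : Fintype.card (Fin n) = Module.finrank (ZMod 2) (Fin n → ZMod 2) := by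
    simp [Module.finrank_fintype_fun_eq_card]
  let b : Module.Basis (Fin n) (ZMod 2) (Fin n → ZMod 2) :=
    basisOfLinearIndependentOfCardEqFinrank hli hcard
  have hbu : ∀ i, b i = u i := fun i => by
    simp [b, coe_basisOfLinearIndependentOfCardEqFinrank]
  have ext_b : ∀ (f g : (Fin n → ZMod 2) ≃ₗ[ZMod 2] (Fin n → ZMod 2)),
      (∀ i, f (b i) = g (b i)) → f = g := fun f g h => by
    apply LinearEquiv.toLinearMap_injective
    exact b.ext h
  refine ⟨⟨⟨fun σ => b.equiv b σ, ?_⟩, ?_⟩, ?_, ?_⟩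
  · exact ext_b _ _ fun i => by
      simp [Module.Basis.equiv_apply]
  · intro σ τ
    exact ext_b _ _ fun i => by
      rw [show ((b.equiv b σ * b.equiv b τ) : (Fin n → ZMod 2) ≃ₗ[ZMod 2] (Fin n → ZMod 2))
        (b i) = (b.equiv b σ) ((b.equiv b τ) (b i)) from rfl]
      simp [Module.Basis.equiv_apply, Equiv.Perm.mul_apply]
  · intro σ τ h
    apply Equiv.ext
    intro i
    apply b.injective
    have := congrArg (fun f => (f : (Fin n → ZMod 2) ≃ₗ[ZMod 2] (Fin n → ZMod 2)) (b i)) h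
    simpa [Module.Basis.equiv_apply] using this
  · intro τ hsw
    obtain ⟨i, j, hij, rfl⟩ := hsw
    refine ⟨u i + u j, ?_, ?_⟩
    · rw [Qform_add, hq, hq, hb i j hij]
      decide
    · have hR : (b.equiv b (Equiv.swap i j)).toLinearMap
          = LinearMap.id + ((Bmap n hn2).flip (u i + u j)).smulRight (u i + u j) := by
        apply b.ext
        intro k
        simp only [LinearEquiv.coe_coe, Module.Basis.equiv_apply, LinearMap.add_apply,
          LinearMap.id_apply, LinearMap.smulRight_apply, LinearMap.flip_apply, Bmap_apply]
        rcases eq_or_ne k i with rfl | hki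
        · rw [Equiv.swap_apply_left]
          simp only [hbu]
          rw [Bform_add_right, Bform_self, hb k j (by exact hij), zero_add, one_smul,
            ← add_assoc, add_self_zero, zero_add]
        · rcases eq_or_ne k j with rfl | hkj
          · rw [Equiv.swap_apply_right]
            simp only [hbu]
            rw [Bform_add_right, Bform_self, hb k i (by exact fun h => hij h.symm),
              add_zero, one_smul,
              show u k + (u i + u k) = u i + (u k + u k) from by abel,
              add_self_zero, add_zero]
          · rw [Equiv.swap_apply_of_ne_of_ne hki hkj]
            simp only [hbu]
            rw [Bform_add_right, hb k i hki, hb k j hkj]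
            rw [show (1 : ZMod 2) + 1 = 0 by decide, zero_smul, add_zero]
      intro w
      have := congrArg (fun f : (Fin n → ZMod 2) →ₗ[ZMod 2] (Fin n → ZMod 2) => f w) hR
      simp only [LinearEquiv.coe_coe, LinearMap.add_apply, LinearMap.id_apply,
        LinearMap.smulRight_apply, LinearMap.flip_apply, Bmap_apply] at this
      rw [show ((⟨⟨fun σ => b.equiv b σ, _⟩, _⟩ : Equiv.Perm (Fin n) →*
        ((Fin n → ZMod 2) ≃ₗ[ZMod 2] (Fin n → ZMod 2))) (Equiv.swap i j)) w
          = (b.equiv b (Equiv.swap i j)) w from rfl, polar_eq]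
      exact this


lemma smul_add_self {n : ℕ} (c : ZMod 2) (z : Fin n → ZMod 2) : c • z + c • z = 0 := by
  rw [← add_smul, show c + c = 0 from (by decide : ∀ a : ZMod 2, a + a = 0) c, zero_smul]

lemma key_arith (n : ℕ) (hmod : n % 8 = 6) (c : ℕ) (hc : c ≤ n) :
    ((c : ZMod 2) + P2 c = 0) ↔ P2 (n - c) = 1 := by
  rw [natCast_zmod2]
  simp only [P2]
  rcases (by omega : c % 4 = 0 ∨ c % 4 = 1 ∨ c % 4 = 2 ∨ c % 4 = 3) with h | h | h | h
  · rw [show c % 2 = 0 by omega, h, show (n-c) % 4 = 2 by omega]; decide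
  · rw [show c % 2 = 1 by omega, h, show (n-c) % 4 = 1 by omega]; decide
  · rw [show c % 2 = 0 by omega, h, show (n-c) % 4 = 0 by omega]; decide
  · rw [show c % 2 = 1 by omega, h, show (n-c) % 4 = 3 by omega]; decide

lemma partB (n : ℕ) (hn : 6 ≤ n) (hmod : n % 8 = 6) :
    ¬ (∃ ψ : Equiv.Perm (Fin (n + 1)) →* ((Fin n → ZMod 2) ≃ₗ[ZMod 2] (Fin n → ZMod 2)),
      Function.Injective ψ ∧
      ∀ τ : Equiv.Perm (Fin (n + 1)), τ.IsSwap →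
        ∃ v : Fin n → ZMod 2, Qform n (by linarith) v = 1 ∧
          ∀ w, (ψ τ) w = w + polarForm (Qform n (by linarith)) w v • v) := by
  have hn2 : 2 ≤ n := by omega
  have hev : n % 2 = 0 := by omega
  rintro ⟨ψ, hinj, hsw⟩
  choose v hv1 hv2 using fun k : Fin n =>
    hsw (Equiv.swap 0 k.succ) ⟨0, k.succ, (Fin.succ_ne_zero k).symm, rfl⟩
  have hv2' : ∀ (k : Fin n) (x : Fin n → ZMod 2),
      ψ (Equiv.swap 0 k.succ) x = x + Bform n hn2 x (v k) • v k := by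
    intro k x
    rw [hv2 k x, polar_eq]
  -- off-diagonal polar values are 1
  have hB1 : ∀ k l : Fin n, k ≠ l → Bform n hn2 (v k) (v l) = 1 := by
    intro k l hkl
    by_contra h1
    have h0 : Bform n hn2 (v k) (v l) = 0 :=
      (by decide : ∀ a : ZMod 2, a ≠ 1 → a = 0) _ h1
    have h0' : Bform n hn2 (v l) (v k) = 0 := by rw [Bform_symm]; exact h0
    set σ : Equiv.Perm (Fin (n+1)) := Equiv.swap 0 k.succ * Equiv.swap 0 l.succ with hσ
    have hsq : σ * σ = 1 := by
      apply hinj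
      rw [map_one, map_mul, map_mul]
      apply LinearEquiv.ext
      intro x
      rw [show ((ψ (Equiv.swap 0 k.succ) * ψ (Equiv.swap 0 l.succ))
            * (ψ (Equiv.swap 0 k.succ) * ψ (Equiv.swap 0 l.succ))
            : (Fin n → ZMod 2) ≃ₗ[ZMod 2] (Fin n → ZMod 2)) x
          = ψ (Equiv.swap 0 k.succ) (ψ (Equiv.swap 0 l.succ)
              (ψ (Equiv.swap 0 k.succ) (ψ (Equiv.swap 0 l.succ) x))) from rfl,
        hv2' l x, hv2' k _, hv2' l _, hv2' k _]
      have rearr : ∀ p q r : Fin n → ZMod 2, p + q + r + q + r = p := by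
        intro p q r
        rw [show p + q + r + q + r = p + (q + q) + (r + r) from by abel,
          add_self_zero, add_self_zero, add_zero, add_zero]
      simp only [Bform_add_left, Bform_smul_left, Bform_self, h0, h0', mul_zero, mul_one,
        zero_mul, add_zero, zero_add]
      rw [show (1 : (Fin n → ZMod 2) ≃ₗ[ZMod 2] (Fin n → ZMod 2)) x = x from rfl]
      exact rearr x _ _
    have : (σ * σ) 0 = k.succ := by
      simp only [hσ, Equiv.Perm.mul_apply]
      rw [Equiv.swap_apply_left, Equiv.swap_apply_of_ne_of_ne (Fin.succ_ne_zero l)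
          (fun h => hkl (Fin.succ_inj.mp h).symm),
        Equiv.swap_apply_right, Equiv.swap_apply_left]
    rw [hsq] at this
    exact Fin.succ_ne_zero k this.symm
  -- counting
  obtain ⟨u, hu0, hub⟩ := gad_mod8 n hmod
  have hZu := count_transfer n hn2 u hev 0 (fun i => hu0 i) (fun i j hij => hub i j hij)
  have hZw := count_transfer n hn2 v hev 1 (fun i => hv1 i) hB1
  have hA : (Finset.univ.filter
      (fun s : Finset (Fin n) => (0:ZMod 2) * (s.card : ZMod 2) + P2 s.card = 0)).card
      = (Finset.univ.filter (fun s : Finset (Fin n) => P2 s.card = 0)).card := by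
    congr 1
    apply Finset.filter_congr
    intro s _
    rw [zero_mul, zero_add]
  have hB : (Finset.univ.filter
      (fun s : Finset (Fin n) => (1:ZMod 2) * (s.card : ZMod 2) + P2 s.card = 0)).card
      = (Finset.univ.filter (fun s : Finset (Fin n) => P2 s.card = 1)).card := by
    apply Finset.card_bij (fun s _ => sᶜ)
    · intro s hs
      simp only [Finset.mem_filter, Finset.mem_univ, true_and] at hs ⊢
      rw [one_mul] at hs
      rw [Finset.card_compl, Fintype.card_fin]
      exact (key_arith n hmod s.card
        (by simpa using Finset.card_le_univ s)).mp hs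
    · intro s _ t _ h
      rw [← compl_compl s, h, compl_compl]
    · intro t ht
      refine ⟨tᶜ, ?_, compl_compl t⟩
      simp only [Finset.mem_filter, Finset.mem_univ, true_and] at ht ⊢
      rw [one_mul]
      apply (key_arith n hmod (tᶜ.card) (by simpa using Finset.card_le_univ tᶜ)).mpr
      rw [Finset.card_compl, Fintype.card_fin,
        Nat.sub_sub_self (by simpa using Finset.card_le_univ t)]
      exact ht
  have htot : (Finset.univ.filter (fun s : Finset (Fin n) => P2 s.card = 0)).card
      + (Finset.univ.filter (fun s : Finset (Fin n) => P2 s.card = 1)).card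
      = 2^n := by
    have h1 := Finset.card_filter_add_card_filter_not
      (s := (Finset.univ : Finset (Finset (Fin n))))
      (p := fun s => P2 s.card = 0)
    have h2 : Finset.univ.filter (fun s : Finset (Fin n) => ¬ (P2 s.card = 0))
        = Finset.univ.filter (fun s : Finset (Fin n) => P2 s.card = 1) := by
      apply Finset.filter_congr
      intro s _
      exact (by decide : ∀ a : ZMod 2, (¬ a = 0) ↔ a = 1) _
    rw [h2] at h1
    rw [h1, Finset.card_univ, Fintype.card_finset, Fintype.card_fin]
  obtain ⟨m, rfl⟩ : ∃ m, n = 2*m+2 := ⟨n/2-1, by omega⟩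
  have hc1 : (Finset.univ.filter
      (fun x : Fin (2*m+2) → ZMod 2 => Qform (2*m+2) hn2 x = 0)).card + 2^m
      = 2^(2*m+1) := count1 m
  have h2 : (2:ℕ)^(2*m+2) = 2 * 2^(2*m+1) := by ring
  have h3 : (0:ℕ) < 2^m := pow_pos (by norm_num) m
  omega

end S14

/-- φ(O_n^{-}(2)) = n when n ≡ 6 (mod 8): S_n embeds with transpositions going to orthogonal transvections t_v with Q(v) = 1, while S_{n+1} does not. -/
theorem phi_O_minus_2_mod8_six (n : ℕ) (hn : 6 ≤ n) (hmod : n % 8 = 6) :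
    (∃ ψ : Equiv.Perm (Fin (n)) →* ((Fin n → ZMod 2) ≃ₗ[ZMod 2] (Fin n → ZMod 2)),
      Function.Injective ψ ∧
      ∀ τ : Equiv.Perm (Fin (n)), τ.IsSwap →
        ∃ v : Fin n → ZMod 2, Qform n (by omega) v = 1 ∧
          ∀ w, (ψ τ) w = w + polarForm (Qform n (by omega)) w v • v) ∧
    ¬ (∃ ψ : Equiv.Perm (Fin (n + 1)) →* ((Fin n → ZMod 2) ≃ₗ[ZMod 2] (Fin n → ZMod 2)),
      Function.Injective ψ ∧
      ∀ τ : Equiv.Perm (Fin (n + 1)), τ.IsSwap →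
        ∃ v : Fin n → ZMod 2, Qform n (by omega) v = 1 ∧
          ∀ w, (ψ τ) w = w + polarForm (Qform n (by omega)) w v • v) := by
  exact ⟨S14.partA n hn hmod, S14.partB n hn hmod⟩
end
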